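/- arXiv:2402.15747 — 3 statements merged into one kernel-verified Lean document; each statement's English description precedes it below -/
import Mathlib

section
/- Let d ≥ 3 be odd and squarefree and let k be an integer with gcd(k, d) = f > 1. Then s_{d,k} = Σ_{1 ≤ a ≤ d, (a/d)=1} ζ_d^{ka} equals μ(d/f)·φ(f)/2, where μ is the Möbius function and φ is Euler's totient function. -/
open Finset Polynomial

noncomputable def zeta (d : ℕ) : ℂ := Complex.exp (2 * Real.pi * Complex.I / d)

/-- `D = (-1)^((d-1)/2) * d`. -/
def Dint (d : ℕ) : ℤ := (-1) ^ ((d - 1) / 2) * d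

/-- the principal square root of `D = (-1)^((d-1)/2) d` (equal to `i√d` when `D < 0`). -/
noncomputable def sqrtD (d : ℕ) : ℂ :=
  if d % 4 = 1 then (Real.sqrt d : ℂ) else Complex.I * (Real.sqrt d : ℂ)

lemma zeta_prim (d : ℕ) (hd : d ≠ 0) : IsPrimitiveRoot (zeta d) d :=
  Complex.isPrimitiveRoot_exp d hd

lemma zeta_zpow_eq_one (d : ℕ) (hd : d ≠ 0) {n : ℤ} (h : (d : ℤ) ∣ n) :
    zeta d ^ n = 1 := by
  obtain ⟨t, rfl⟩ := h
  rw [zpow_mul, zpow_natCast, (zeta_prim d hd).pow_eq_one, one_zpow]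

lemma zeta_zpow_congr (d : ℕ) (hd : d ≠ 0) {m n : ℤ} (h : m ≡ n [ZMOD d]) :
    zeta d ^ m = zeta d ^ n := by
  have hz : zeta d ≠ 0 := (zeta_prim d hd).ne_zero hd
  have : zeta d ^ (m - n) = 1 := zeta_zpow_eq_one d hd (Int.ModEq.dvd h.symm)
  have := congrArg (· * zeta d ^ n) this
  simpa [sub_eq_add_neg, zpow_add₀ hz, zpow_neg, mul_assoc,
    zpow_ne_zero, hz, inv_mul_cancel₀, one_mul] using this

lemma geom_aux (w : ℂ) (n : ℕ) (hw : w ^ n = 1) :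
    ∑ b ∈ range n, w ^ b = if w = 1 then (n : ℂ) else 0 := by
  split_ifs with h
  · simp [h]
  · rw [geom_sum_eq h, hw]
    simp

lemma moebius_indicator (a d : ℕ) (hd : d ≠ 0) :
    ∑ e ∈ d.divisors.filter (fun e => e ∣ a), ((ArithmeticFunction.moebius e : ℤ) : ℂ)
      = if Nat.Coprime a d then 1 else 0 := by
  have hset : d.divisors.filter (fun e => e ∣ a) = (Nat.gcd a d).divisors := by
    ext e
    simp only [Finset.mem_filter, Nat.mem_divisors, Nat.dvd_gcd_iff]
    constructor
    · rintro ⟨⟨h1, h2⟩, h3⟩; exact ⟨⟨h3, h1⟩, Nat.gcd_ne_zero_right hd⟩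
    · rintro ⟨⟨h1, h2⟩, h3⟩; exact ⟨⟨h2, hd⟩, h1⟩
  rw [hset]
  have := ArithmeticFunction.moebius_mul_coe_zeta
  have happ := congrArg (fun F : ArithmeticFunction ℤ => F (Nat.gcd a d)) this
  simp only [ArithmeticFunction.coe_mul_zeta_apply, ArithmeticFunction.one_apply] at happ
  have : ((∑ e ∈ (Nat.gcd a d).divisors, ArithmeticFunction.moebius e : ℤ) : ℂ)
      = ((if Nat.gcd a d = 1 then (1:ℤ) else 0 : ℤ) : ℂ) := by rw [happ]
  rw [Int.cast_sum] at this
  rw [this]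
  unfold Nat.Coprime
  split_ifs <;> simp

lemma sum_multiples (e n : ℕ) (he : 0 < e) (g : ℕ → ℂ) :
    ∑ a ∈ (range (e * n)).filter (fun a => e ∣ a), g a = ∑ b ∈ range n, g (e * b) := by
  have hset : (range (e * n)).filter (fun a => e ∣ a) = (range n).image (fun b => e * b) := by
    ext a
    simp only [Finset.mem_filter, Finset.mem_range, Finset.mem_image]
    constructor
    · rintro ⟨h1, b, rfl⟩
      exact ⟨b, Nat.lt_of_mul_lt_mul_left h1, rfl⟩
    · rintro ⟨b, hb, rfl⟩
      exact ⟨Nat.mul_lt_mul_left he |>.2 hb, b, rfl⟩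
  rw [hset, Finset.sum_image]
  intro x _ y _ h
  exact Nat.eq_of_mul_eq_mul_left he h

-- step B: inner geometric sum

lemma inner_geom (d : ℕ) (hd : d ≠ 0) (k : ℤ) (e : ℕ) (he : e ∣ d) (he0 : e ≠ 0) :
    ∑ b ∈ range (d / e), zeta d ^ (k * (e * b : ℕ)) =
      if ((d / e : ℕ) : ℤ) ∣ k then ((d / e : ℕ) : ℂ) else 0 := by
  have hrw : ∀ b : ℕ, zeta d ^ (k * (e * b : ℕ)) = (zeta d ^ (k * e)) ^ b := by
    intro b
    rw [← zpow_natCast (zeta d ^ (k * e)) b, ← zpow_mul]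
    push_cast
    ring_nf
  simp_rw [hrw]
  have hed : (e : ℤ) * ((d / e : ℕ) : ℤ) = (d : ℤ) := by
    exact_mod_cast congrArg (Nat.cast : ℕ → ℤ) (Nat.mul_div_cancel' he)
  have hw : (zeta d ^ (k * e)) ^ (d / e) = 1 := by
    rw [← zpow_natCast, ← zpow_mul]
    apply zeta_zpow_eq_one d hd
    refine ⟨k, ?_⟩
    rw [← hed]; ring
  rw [geom_aux _ _ hw]
  have hiff : (zeta d ^ (k * e) = 1) ↔ (((d / e : ℕ) : ℤ) ∣ k) := by
    rw [(zeta_prim d hd).zpow_eq_one_iff_dvd]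
    constructor
    · rintro ⟨c, hc⟩
      rw [← hed] at hc
      refine ⟨c, ?_⟩
      have he0' : (e : ℤ) ≠ 0 := Int.natCast_ne_zero.2 he0
      have : (e:ℤ) * k = (e:ℤ) * (((d / e : ℕ) : ℤ) * c) := by linarith [hc]
      have := mul_left_cancel₀ he0' this
      linarith
    · rintro ⟨c, rfl⟩
      exact ⟨c, by rw [← hed]; ring⟩
  simp_rw [hiff]

lemma totient_moebius_sum (f : ℕ) (hf : 0 < f) :
    ∑ m ∈ f.divisors, ((ArithmeticFunction.moebius (f / m) : ℤ) : ℂ) * (m : ℂ)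
      = (Nat.totient f : ℂ) := by
  have key := (ArithmeticFunction.sum_eq_iff_sum_smul_moebius_eq
    (f := fun n => (Nat.totient n : ℂ)) (g := fun n => (n : ℂ))).1
    (fun n hn => by exact_mod_cast congrArg (Nat.cast : ℕ → ℂ) (Nat.sum_totient n)) f hf
  rw [← key]
  rw [← Nat.sum_divisorsAntidiagonal' (f := fun x y => ((ArithmeticFunction.moebius x : ℤ) : ℂ) * (y : ℂ))]
  apply Finset.sum_congr rfl
  intro x _
  rw [zsmul_eq_mul]

-- coprimality of complement for squarefree

lemma squarefree_coprime_div (d f : ℕ) (hsf : Squarefree d) (hfd : f ∣ d) :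
    Nat.Coprime (d / f) f := by
  have h : Nat.gcd (d / f) f * Nat.gcd (d / f) f ∣ d := by
    calc Nat.gcd (d / f) f * Nat.gcd (d / f) f ∣ (d / f) * f :=
      mul_dvd_mul (Nat.gcd_dvd_left _ _) (Nat.gcd_dvd_right _ _)
    _ = d := Nat.div_mul_cancel hfd
  exact Nat.isUnit_iff.1 (hsf _ h)

lemma moebius_split (d f m : ℕ) (hsf : Squarefree d) (hfd : f ∣ d) (hmf : m ∣ f) :
    ArithmeticFunction.moebius (d / m)
      = ArithmeticFunction.moebius (d / f) * ArithmeticFunction.moebius (f / m) := by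
  have hcop : Nat.Coprime (d / f) (f / m) :=
    (squarefree_coprime_div d f hsf hfd).coprime_dvd_right (Nat.div_dvd_of_dvd hmf)
  have heq : d / m = (d / f) * (f / m) := by
    have h1 : (d / f) * (f / m) = (d * f) / (f * m) := Nat.div_mul_div_comm hfd hmf
    rw [h1, mul_comm d f, Nat.mul_div_mul_left _ _ (Nat.pos_of_dvd_of_pos hfd (Nat.pos_of_ne_zero hsf.ne_zero))]
  rw [heq]
  exact ArithmeticFunction.isMultiplicative_moebius.map_mul_of_coprime hcop

lemma ramanujan (d : ℕ) (hsf : Squarefree d) (k : ℤ) (f : ℕ) (hf : f = Int.gcd k d) :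
    ∑ a ∈ range d, (if Nat.Coprime a d then zeta d ^ (k * a) else 0)
      = ((ArithmeticFunction.moebius (d / f) : ℤ) : ℂ) * (Nat.totient f : ℂ) := by
  have hd0 : d ≠ 0 := hsf.ne_zero
  have hfd : f ∣ d := by
    rw [hf]
    exact Int.natCast_dvd_natCast.1 (by exact_mod_cast Int.gcd_dvd_right (a := k) (b := (d:ℤ)))
  have hf0 : f ≠ 0 := by
    rintro rfl
    exact hd0 (Nat.eq_zero_of_zero_dvd hfd)
  -- Step 1: insert moebius indicator and swap sums
  have step1 : ∑ a ∈ range d, (if Nat.Coprime a d then zeta d ^ (k * a) else 0)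
      = ∑ e ∈ d.divisors, ((ArithmeticFunction.moebius e : ℤ) : ℂ) *
          (∑ a ∈ (range d).filter (fun a => e ∣ a), zeta d ^ (k * a)) := by
    have : ∀ a, (if Nat.Coprime a d then zeta d ^ (k * a) else 0)
        = ∑ e ∈ d.divisors.filter (fun e => e ∣ a),
            ((ArithmeticFunction.moebius e : ℤ) : ℂ) * zeta d ^ (k * a) := by
      intro a
      rw [← Finset.sum_mul, moebius_indicator a d hd0]
      split_ifs <;> simp
    simp_rw [this]
    rw [Finset.sum_comm' (s := range d) (t := fun a => d.divisors.filter (fun e => e ∣ a))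
      (t' := d.divisors) (s' := fun e => (range d).filter (fun a => e ∣ a))]
    · simp_rw [Finset.mul_sum]
    · intro a e
      simp only [Finset.mem_filter]
      tauto
  rw [step1]
  -- Step 2: compute inner sums
  have step2 : ∀ e ∈ d.divisors,
      ((ArithmeticFunction.moebius e : ℤ) : ℂ) *
          (∑ a ∈ (range d).filter (fun a => e ∣ a), zeta d ^ (k * a))
      = ((ArithmeticFunction.moebius e : ℤ) : ℂ) *
          (if ((d / e : ℕ) : ℤ) ∣ k then ((d / e : ℕ) : ℂ) else 0) := by
    intro e he
    rw [Nat.mem_divisors] at he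
    obtain ⟨hed, _⟩ := he
    have he0 : e ≠ 0 := by
      rintro rfl
      exact hd0 (Nat.eq_zero_of_zero_dvd hed)
    congr 1
    have hset : (range d).filter (fun a => e ∣ a)
        = (range (e * (d / e))).filter (fun a => e ∣ a) := by
      rw [Nat.mul_div_cancel' hed]
    rw [hset, sum_multiples e (d / e) (Nat.pos_of_ne_zero he0) (fun a => zeta d ^ (k * a)),
      inner_geom d hd0 k e hed he0]
  rw [Finset.sum_congr rfl step2]
  -- Step 3: reindex e ↦ d / e
  have step3 : ∀ e ∈ d.divisors,
      ((ArithmeticFunction.moebius e : ℤ) : ℂ) *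
        (if ((d / e : ℕ) : ℤ) ∣ k then ((d / e : ℕ) : ℂ) else 0)
      = (fun m => ((ArithmeticFunction.moebius (d / m) : ℤ) : ℂ) *
          (if ((m : ℕ) : ℤ) ∣ k then ((m : ℕ) : ℂ) else 0)) (d / e) := by
    intro e he
    rw [Nat.mem_divisors] at he
    simp only
    rw [Nat.div_div_self he.1 hd0]
  rw [Finset.sum_congr rfl step3, Nat.sum_div_divisors d
    (fun m => ((ArithmeticFunction.moebius (d / m) : ℤ) : ℂ) *
      (if ((m : ℕ) : ℤ) ∣ k then ((m : ℕ) : ℂ) else 0))]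
  -- Step 4: restrict to divisors of f
  rw [← Finset.sum_filter_add_sum_filter_not d.divisors (fun m => ((m : ℕ) : ℤ) ∣ k)]
  have hzero : ∑ m ∈ d.divisors.filter (fun m => ¬ ((m : ℕ) : ℤ) ∣ k),
      ((ArithmeticFunction.moebius (d / m) : ℤ) : ℂ) *
        (if ((m : ℕ) : ℤ) ∣ k then ((m : ℕ) : ℂ) else 0) = 0 := by
    apply Finset.sum_eq_zero
    intro m hm
    rw [Finset.mem_filter] at hm
    rw [if_neg hm.2, mul_zero]
  rw [hzero, add_zero]
  have hfk : (f : ℤ) ∣ k := by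
    rw [hf]; exact Int.gcd_dvd_left _ _
  have hset : d.divisors.filter (fun m => ((m : ℕ) : ℤ) ∣ k) = f.divisors := by
    ext m
    simp only [Finset.mem_filter, Nat.mem_divisors]
    constructor
    · rintro ⟨⟨h1, _⟩, h2⟩
      refine ⟨Int.natCast_dvd_natCast.1 ?_, hf0⟩
      rw [hf]
      exact Int.dvd_coe_gcd h2 (Int.natCast_dvd_natCast.2 h1)
    · rintro ⟨h1, _⟩
      exact ⟨⟨h1.trans hfd, hd0⟩, (Int.natCast_dvd_natCast.2 h1).trans hfk⟩
  rw [hset]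
  -- Step 5: split the moebius function and conclude
  have step5 : ∀ m ∈ f.divisors,
      ((ArithmeticFunction.moebius (d / m) : ℤ) : ℂ) *
        (if ((m : ℕ) : ℤ) ∣ k then ((m : ℕ) : ℂ) else 0)
      = ((ArithmeticFunction.moebius (d / f) : ℤ) : ℂ) *
          (((ArithmeticFunction.moebius (f / m) : ℤ) : ℂ) * (m : ℂ)) := by
    intro m hm
    rw [Nat.mem_divisors] at hm
    rw [if_pos ((Int.natCast_dvd_natCast.2 hm.1).trans hfk),
      moebius_split d f m hsf hfd hm.1]
    push_cast
    ring
  rw [Finset.sum_congr rfl step5, ← Finset.mul_sum,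
    totient_moebius_sum f (Nat.pos_of_ne_zero hf0)]

lemma natModEq_intCast {n a b : ℕ} (h : a ≡ b [MOD n]) : (a : ℤ) ≡ (b : ℤ) [ZMOD n] := by
  show (a : ℤ) % (n : ℤ) = (b : ℤ) % (n : ℤ)
  rw [← Int.natCast_mod, ← Int.natCast_mod]
  exact_mod_cast h

lemma swap_sum (d : ℕ) (hd1 : 1 < d) (k : ℤ) (b c : ℕ)
    (hbc : b * c ≡ 1 [MOD d]) (hjb : jacobiSym (b : ℤ) d = -1)
    (hkb : (k : ℤ) * b ≡ k [ZMOD d]) :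
    ∑ a ∈ (range d).filter (fun a : ℕ => jacobiSym (a : ℤ) d = 1), zeta d ^ (k * a)
      = ∑ a ∈ (range d).filter (fun a : ℕ => jacobiSym (a : ℤ) d = -1), zeta d ^ (k * a) := by
  have hd0 : d ≠ 0 := by omega
  haveI : NeZero d := ⟨hd0⟩
  have hjc : jacobiSym (c : ℤ) d = -1 := by
    have h1 : jacobiSym ((b * c : ℕ) : ℤ) d = 1 := by
      rw [jacobiSym.mod_left]
      rw [show (((b * c : ℕ) : ℤ)) % d = ((1 : ℕ) : ℤ) % d by
        push_cast [← Int.natCast_mod]; exact_mod_cast hbc]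
      rw [← jacobiSym.mod_left]
      exact jacobiSym.one_left d
    push_cast at h1
    rw [jacobiSym.mul_left, hjb] at h1
    linarith
  have hkc : (k : ℤ) * c ≡ k [ZMOD d] := by
    calc (k : ℤ) * c ≡ (k * b) * c [ZMOD d] := (hkb.symm.mul_right c)
    _ = k * (b * c : ℕ) := by push_cast; ring
    _ ≡ k * 1 [ZMOD d] := (natModEq_intCast hbc).mul_left k
    _ = k := mul_one k
  -- key congruence facts
  have key : ∀ (u : ℕ) (hju : jacobiSym (u : ℤ) d = -1)
      (hku : (k : ℤ) * u ≡ k [ZMOD d]) (a : ℕ), a < d →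
      zeta d ^ (k * ((u * a) % d : ℕ)) = zeta d ^ (k * a) := by
    intro u hju hku a _
    apply zeta_zpow_congr d hd0
    calc (k : ℤ) * ((u * a) % d : ℕ) ≡ k * (u * a : ℕ) [ZMOD d] :=
      (natModEq_intCast (Nat.mod_modEq (u * a) d)).mul_left k
    _ = (k * u) * a := by push_cast; ring
    _ ≡ k * a [ZMOD d] := hku.mul_right a
  have jmul : ∀ (u a : ℕ), jacobiSym (((u * a) % d : ℕ) : ℤ) d
      = jacobiSym (u : ℤ) d * jacobiSym (a : ℤ) d := by
    intro u a
    have h1 : jacobiSym (((u * a) % d : ℕ) : ℤ) d = jacobiSym ((u * a : ℕ) : ℤ) d := by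
      rw [Int.natCast_mod]
      exact (jacobiSym.mod_left _ _).symm
    rw [h1]
    push_cast
    exact jacobiSym.mul_left u a d
  refine Finset.sum_nbij' (fun a => (b * a) % d) (fun a => (c * a) % d) ?_ ?_ ?_ ?_ ?_
  · intro a ha
    simp only [Finset.mem_filter, Finset.mem_range] at ha ⊢
    exact ⟨Nat.mod_lt _ (Nat.pos_of_ne_zero hd0), by rw [jmul, hjb, ha.2, mul_one]⟩
  · intro a ha
    simp only [Finset.mem_filter, Finset.mem_range] at ha ⊢
    refine ⟨Nat.mod_lt _ (Nat.pos_of_ne_zero hd0), by rw [jmul, hjc, ha.2]; ring⟩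
  · intro a ha
    simp only [Finset.mem_filter, Finset.mem_range] at ha
    calc (c * ((b * a) % d)) % d = (c * (b * a)) % d := by
          rw [Nat.mul_mod, Nat.mod_mod_of_dvd, ← Nat.mul_mod]
          exact dvd_refl d
    _ = ((b * c) * a) % d := by ring_nf
    _ = (1 * a) % d := by rw [Nat.mul_mod, show (b * c) % d = 1 % d from hbc, ← Nat.mul_mod]
    _ = a := by rw [one_mul, Nat.mod_eq_of_lt ha.1]
  · intro a ha
    simp only [Finset.mem_filter, Finset.mem_range] at ha
    calc (b * ((c * a) % d)) % d = (b * (c * a)) % d := by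
          rw [Nat.mul_mod, Nat.mod_mod_of_dvd, ← Nat.mul_mod]
          exact dvd_refl d
    _ = ((b * c) * a) % d := by ring_nf
    _ = (1 * a) % d := by rw [Nat.mul_mod, show (b * c) % d = 1 % d from hbc, ← Nat.mul_mod]
    _ = a := by rw [one_mul, Nat.mod_eq_of_lt ha.1]
  · intro a ha
    simp only [Finset.mem_filter, Finset.mem_range] at ha
    exact (key b hjb hkb a ha.1).symm

lemma exists_b (d : ℕ) (hd : 3 ≤ d) (hodd : Odd d) (hsf : Squarefree d) (k : ℤ) (f : ℕ)
    (hf : f = Int.gcd k d) (h1 : 1 < f) :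
    ∃ b c : ℕ, b * c ≡ 1 [MOD d] ∧ jacobiSym (b : ℤ) d = -1 ∧ (k : ℤ) * b ≡ k [ZMOD d] := by
  have hd0 : d ≠ 0 := by omega
  haveI : NeZero d := ⟨hd0⟩
  have hfd : f ∣ d := by
    rw [hf]
    exact Int.natCast_dvd_natCast.1 (by exact_mod_cast Int.gcd_dvd_right (a := k) (b := (d:ℤ)))
  set p := f.minFac with hp
  have hpp : p.Prime := Nat.minFac_prime (by omega)
  haveI : Fact p.Prime := ⟨hpp⟩
  have hpf : p ∣ f := Nat.minFac_dvd f
  have hpd : p ∣ d := hpf.trans hfd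
  have hp2 : p ≠ 2 := by
    intro h
    have h2 : (2 : ℕ) ∣ d := h ▸ hpd
    rcases hodd with ⟨t, ht⟩
    omega
  have hcop : Nat.Coprime p (d / p) := (squarefree_coprime_div d p hsf hpd).symm
  -- a quadratic nonresidue mod p
  obtain ⟨x, hx⟩ := quadraticChar_exists_neg_one (F := ZMod p) (by
    rw [ZMod.ringChar_zmod_n]; exact hp2)
  have hxns : ¬ IsSquare x := quadraticChar_neg_one_iff_not_isSquare.1 hx
  have hxval : jacobiSym ((x.val : ℕ) : ℤ) p = -1 := by
    rw [ZMod.nonsquare_iff_jacobiSym_eq_neg_one]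
    rwa [show (((x.val : ℕ) : ℤ) : ZMod p) = x by push_cast [ZMod.natCast_val]; simp]
  -- CRT
  obtain ⟨b, hb1, hb2⟩ := Nat.chineseRemainder hcop x.val 1
  have hdp : p * (d / p) = d := Nat.mul_div_cancel' hpd
  have hp0 : p ≠ 0 := hpp.ne_zero
  have hdp0 : d / p ≠ 0 := by
    intro h
    rw [h, mul_zero] at hdp
    omega
  have hjb : jacobiSym (b : ℤ) d = -1 := by
    rw [← hdp, jacobiSym.mul_right' _ hp0 hdp0]
    have e1 : jacobiSym (b : ℤ) p = -1 := by
      rw [jacobiSym.mod_left, show ((b : ℤ) % p) = (((x.val : ℕ) : ℤ) % p) by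
        rw [← Int.natCast_mod, ← Int.natCast_mod]; exact_mod_cast hb1,
        ← jacobiSym.mod_left, hxval]
    have e2 : jacobiSym (b : ℤ) (d / p) = 1 := by
      rw [jacobiSym.mod_left, show ((b : ℤ) % ((d / p : ℕ) : ℤ)) = (((1 : ℕ) : ℤ) % ((d / p : ℕ) : ℤ)) by
        rw [← Int.natCast_mod, ← Int.natCast_mod]; exact_mod_cast hb2,
        ← jacobiSym.mod_left]
      exact_mod_cast jacobiSym.one_left (d / p)
    rw [e1, e2, mul_one]
  have hkb : (k : ℤ) * b ≡ k [ZMOD d] := by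
    have hdvd : (d : ℤ) ∣ k * b - k := by
      have hpk : (p : ℤ) ∣ k := by
        have : (f : ℤ) ∣ k := hf ▸ Int.gcd_dvd_left k d
        exact (Int.natCast_dvd_natCast.2 hpf).trans this
      have hbd : ((d / p : ℕ) : ℤ) ∣ (b : ℤ) - 1 := by
        have h := (Nat.modEq_iff_dvd (n := d / p)).1 hb2
        have h2 := dvd_neg.2 h
        simpa using h2
      have : (p : ℤ) * ((d / p : ℕ) : ℤ) ∣ k * ((b : ℤ) - 1) :=
        mul_dvd_mul hpk hbd
      rw [show ((p : ℕ) : ℤ) * ((d / p : ℕ) : ℤ) = (d : ℤ) by exact_mod_cast congrArg (Nat.cast : ℕ → ℤ) hdp] at this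
      rw [show k * (b : ℤ) - k = k * ((b : ℤ) - 1) by ring]
      exact this
    exact (Int.modEq_iff_dvd).2 (by simpa using dvd_neg.2 hdvd)
  -- inverse c
  have hcopbd : Nat.Coprime b d := by
    have : Int.gcd (b : ℤ) d = 1 := by
      by_contra hne
      have := jacobiSym.eq_zero_iff_not_coprime.2 hne
      rw [hjb] at this
      norm_num at this
    rwa [Int.gcd_natCast_natCast] at this
  obtain ⟨c, -, hc⟩ := Nat.exists_mul_mod_eq_one_of_coprime hcopbd (by omega)
  refine ⟨b, c, ?_, hjb, hkb⟩
  show b * c % d = 1 % d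
  rw [hc, Nat.mod_eq_of_lt (by omega)]

theorem stmt1 (d : ℕ) (hd : 3 ≤ d) (hodd : Odd d) (hsf : Squarefree d)
    (k : ℤ) (f : ℕ) (hf : f = Int.gcd k d) (h1 : 1 < f) :
    ∑ a ∈ (Finset.Icc 1 d).filter (fun a : ℕ => jacobiSym (a : ℤ) d = 1), zeta d ^ (k * a) =
      (ArithmeticFunction.moebius (d / f) : ℂ) * (Nat.totient f : ℂ) / 2 := by
  have hd0 : d ≠ 0 := by omega
  haveI : NeZero d := ⟨hd0⟩
  have hsetIcc : (Finset.Icc 1 d).filter (fun a : ℕ => jacobiSym (a : ℤ) d = 1)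
      = (range d).filter (fun a : ℕ => jacobiSym (a : ℤ) d = 1) := by
    ext a
    simp only [Finset.mem_filter, Finset.mem_Icc, Finset.mem_range]
    constructor
    · rintro ⟨⟨ha1, ha2⟩, ha3⟩
      refine ⟨lt_of_le_of_ne ha2 ?_, ha3⟩
      rintro rfl
      have h0 : jacobiSym (a : ℤ) a = 0 := jacobiSym.eq_zero_iff_not_coprime.2 (by
        rw [Int.gcd_natCast_natCast, Nat.gcd_self]; omega)
      rw [h0] at ha3
      norm_num at ha3
    · rintro ⟨ha1, ha3⟩
      refine ⟨⟨?_, le_of_lt ha1⟩, ha3⟩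
      rcases Nat.eq_zero_or_pos a with rfl | h
      · rw [show ((0 : ℕ) : ℤ) = 0 by norm_num, jacobiSym.zero_left (by omega)] at ha3
        norm_num at ha3
      · exact h
  rw [hsetIcc]
  obtain ⟨b, c, hbc, hjb, hkb⟩ := exists_b d hd hodd hsf k f hf h1
  have hswap := swap_sum d (by omega) k b c hbc hjb hkb
  have hsum : (∑ a ∈ (range d).filter (fun a : ℕ => jacobiSym (a : ℤ) d = 1), zeta d ^ (k * a))
      + (∑ a ∈ (range d).filter (fun a : ℕ => jacobiSym (a : ℤ) d = -1), zeta d ^ (k * a))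
      = ((ArithmeticFunction.moebius (d / f) : ℤ) : ℂ) * (Nat.totient f : ℂ) := by
    rw [← ramanujan d hsf k f hf, Finset.sum_filter, Finset.sum_filter,
      ← Finset.sum_add_distrib]
    apply Finset.sum_congr rfl
    intro a _
    by_cases hc : Nat.Coprime a d
    · have hg : Int.gcd (a : ℤ) d = 1 := by rwa [Int.gcd_natCast_natCast]
      rcases jacobiSym.eq_one_or_neg_one hg with h | h
      · rw [if_pos h, if_neg (by rw [h]; norm_num), if_pos hc, add_zero]
      · rw [if_neg (by rw [h]; norm_num), if_pos h, if_pos hc, zero_add]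
    · have h0 : jacobiSym (a : ℤ) d = 0 := jacobiSym.eq_zero_iff_not_coprime.2 (by
        rwa [Int.gcd_natCast_natCast])
      rw [if_neg (by rw [h0]; norm_num), if_neg (by rw [h0]; norm_num), if_neg hc, add_zero]
  rw [← hswap] at hsum
  linear_combination hsum / 2
end

section
/- For coprime positive odd integers d and m, the quadratic Gauss sums satisfy g_{dm,k} = (-1)^{(d-1)(m-1)/4} · g_{d,k} · g_{m,k}, where g_{n,k} = Σ_{1 ≤ a ≤ n, gcd(a,n)=1} (a/n) ζ_n^{ka}. -/
open Finset Polynomial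

/-- the quadratic Gauss sum `g_{n,k}`. -/
noncomputable def gaussSum' (n : ℕ) (k : ℤ) : ℂ :=
  ∑ a ∈ (Finset.Icc 1 n).filter (fun a => Nat.gcd a n = 1),
    (jacobiSym a n : ℂ) * zeta n ^ (k * a)

lemma zeta_ne_zero (n : ℕ) : zeta n ≠ 0 := by
  rw [zeta]; exact Complex.exp_ne_zero _

lemma zeta_zpow (n : ℕ) (j : ℤ) :
    zeta n ^ j = Complex.exp (2 * Real.pi * Complex.I * j / n) := by
  rw [zeta, ← Complex.exp_int_mul]
  congr 1
  ring

lemma zeta_pow_nat_mul (n : ℕ) (hn : n ≠ 0) (t : ℤ) : zeta n ^ ((n : ℤ) * t) = 1 := by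
  rw [zeta_zpow]
  have hn' : (n : ℂ) ≠ 0 := Nat.cast_ne_zero.mpr hn
  have h : (2 * (Real.pi : ℂ) * Complex.I * (((n : ℤ) * t : ℤ) : ℂ) / n : ℂ)
      = (t : ℂ) * (2 * Real.pi * Complex.I) := by
    push_cast
    field_simp
  rw [h, Complex.exp_int_mul_two_pi_mul_I]

lemma zeta_zpow_congr_s2 {n : ℕ} (hn : n ≠ 0) {a b : ℤ} (h : (n : ℤ) ∣ (a - b)) :
    zeta n ^ a = zeta n ^ b := by
  obtain ⟨t, ht⟩ := h
  have hab : a = b + (n : ℤ) * t := by linarith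
  rw [hab, zpow_add₀ (zeta_ne_zero n), zeta_pow_nat_mul n hn t, mul_one]

lemma zeta_mul_pow (d m : ℕ) (hd : d ≠ 0) (hm : m ≠ 0) (j : ℤ) :
    zeta (d * m) ^ ((m : ℤ) * j) = zeta d ^ j := by
  rw [zeta_zpow, zeta_zpow]
  have hd' : (d : ℂ) ≠ 0 := Nat.cast_ne_zero.mpr hd
  have hm' : (m : ℂ) ≠ 0 := Nat.cast_ne_zero.mpr hm
  congr 1
  push_cast
  field_simp

lemma gaussSum'_eq (n : ℕ) [NeZero n] (k : ℤ) :
    gaussSum' n k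
      = ∑ a : ZMod n, (jacobiSym (a.val : ℤ) n : ℂ) * zeta n ^ (k * a.val) := by
  have hn : n ≠ 0 := NeZero.ne n
  have hn0 : 0 < n := Nat.pos_of_ne_zero hn
  have h1 : gaussSum' n k
      = ∑ a ∈ Finset.Icc 1 n, (jacobiSym a n : ℂ) * zeta n ^ (k * a) := by
    rw [gaussSum']
    refine Finset.sum_subset (Finset.filter_subset _ _) ?_
    intro x hx hx'
    have hgcd : Nat.gcd x n ≠ 1 := by
      simp only [Finset.mem_filter] at hx'
      tauto
    have hj : jacobiSym x n = 0 := by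
      apply jacobiSym.eq_zero_iff_not_coprime.mpr
      rwa [Int.gcd_natCast_natCast]
    simp [hj]
  have h2 : ∑ a ∈ Finset.Icc 1 n, (jacobiSym a n : ℂ) * zeta n ^ (k * a)
      = ∑ a ∈ Finset.range n, (jacobiSym a n : ℂ) * zeta n ^ (k * a) := by
    have e1 : Finset.Icc 1 n = insert n (Finset.Ico 1 n) := by
      ext x; simp only [Finset.mem_Icc, Finset.mem_insert, Finset.mem_Ico]; omega
    have e2 : Finset.range n = insert 0 (Finset.Ico 1 n) := by
      ext x; simp only [Finset.mem_range, Finset.mem_insert, Finset.mem_Ico]; omega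
    rw [e1, e2, Finset.sum_insert (by simp), Finset.sum_insert (by simp)]
    congr 1
    have hj : jacobiSym (n : ℤ) n = jacobiSym ((0 : ℕ) : ℤ) n := by
      rw [jacobiSym.mod_left]
      simp
    rw [hj]
    congr 1
    rw [mul_comm k ((n : ℕ) : ℤ), zeta_pow_nat_mul n hn]
    simp
  have h3 : ∑ a ∈ Finset.range n, (jacobiSym a n : ℂ) * zeta n ^ (k * a)
      = ∑ a : ZMod n, (jacobiSym (a.val : ℤ) n : ℂ) * zeta n ^ (k * a.val) := by
    refine Finset.sum_nbij' (fun a => (a : ZMod n)) (fun x => x.val)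
      (fun a _ => Finset.mem_univ _) (fun x _ => Finset.mem_range.mpr (ZMod.val_lt x))
      (fun a ha => ZMod.val_cast_of_lt (Finset.mem_range.mp ha))
      (fun x _ => ZMod.natCast_rightInverse x) ?_
    intro a ha
    rw [ZMod.val_cast_of_lt (Finset.mem_range.mp ha)]
  rw [h1, h2, h3]

theorem stmt2 (d m : ℕ) (hd : 0 < d) (hm : 0 < m) (hdodd : Odd d) (hmodd : Odd m)
    (hcop : Nat.Coprime d m) (k : ℤ) :
    gaussSum' (d * m) k =
      (-1 : ℂ) ^ ((d - 1) * (m - 1) / 4) * gaussSum' d k * gaussSum' m k := by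
  have hd0 : d ≠ 0 := hd.ne'
  have hm0 : m ≠ 0 := hm.ne'
  haveI : NeZero d := ⟨hd0⟩
  haveI : NeZero m := ⟨hm0⟩
  haveI : NeZero (d * m) := ⟨Nat.mul_ne_zero hd0 hm0⟩
  set N := d * m with hN
  have hN0 : N ≠ 0 := Nat.mul_ne_zero hd0 hm0
  -- the term of the Gauss sum, as a function of an integer representative
  set F : ℤ → ℂ := fun A => (jacobiSym A N : ℂ) * zeta N ^ (k * A) with hF
  have hFmod : ∀ A : ℤ, F (A % N) = F A := by
    intro A
    rw [hF]
    dsimp only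
    congr 1
    · rw [← jacobiSym.mod_left]
    · apply zeta_zpow_congr_s2 hN0
      refine ⟨k * (-(A / N)), ?_⟩
      rw [Int.emod_def]
      ring
  -- the key term computation
  have key : ∀ p : ZMod d × ZMod m,
      (jacobiSym ((((m * p.1.val + d * p.2.val : ℕ) : ZMod N)).val : ℤ) N : ℂ)
        * zeta N ^ (k * (((m * p.1.val + d * p.2.val : ℕ) : ZMod N)).val)
      = ((jacobiSym m d * jacobiSym d m : ℤ) : ℂ)
        * ((jacobiSym (p.1.val : ℤ) d : ℂ) * zeta d ^ (k * p.1.val))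
        * ((jacobiSym (p.2.val : ℤ) m : ℂ) * zeta m ^ (k * p.2.val)) := by
    rintro ⟨x, y⟩
    dsimp only
    set A : ℕ := m * x.val + d * y.val with hA
    have hval : ((((A : ℕ) : ZMod N)).val : ℤ) = (A : ℤ) % N := by
      rw [ZMod.val_natCast]
      push_cast
      rfl
    have hstep : (jacobiSym ((((A : ℕ) : ZMod N)).val : ℤ) N : ℂ)
        * zeta N ^ (k * (((A : ℕ) : ZMod N)).val) = F A := by
      rw [← hFmod A, hF]
      dsimp only
      rw [hval]
    rw [hstep, hF]
    dsimp only
    -- Jacobi symbol part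
    have hJd : jacobiSym (A : ℤ) d = jacobiSym m d * jacobiSym x.val d := by
      rw [jacobiSym.mod_left]
      have : ((A : ℤ)) % d = ((m : ℤ) * x.val) % d := by
        push_cast [hA]
        rw [Int.add_mul_emod_self_left]
      rw [this, ← jacobiSym.mod_left, jacobiSym.mul_left]
    have hJm : jacobiSym (A : ℤ) m = jacobiSym d m * jacobiSym y.val m := by
      rw [jacobiSym.mod_left]
      have : ((A : ℤ)) % m = ((d : ℤ) * y.val) % m := by
        push_cast [hA]
        rw [add_comm, Int.add_mul_emod_self_left]
      rw [this, ← jacobiSym.mod_left, jacobiSym.mul_left]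
    have hJ : jacobiSym (A : ℤ) N
        = jacobiSym m d * jacobiSym x.val d * (jacobiSym d m * jacobiSym y.val m) := by
      rw [hN, jacobiSym.mul_right, hJd, hJm]
    -- zeta part
    have hz : zeta N ^ (k * (A : ℤ)) = zeta d ^ (k * x.val) * zeta m ^ (k * y.val) := by
      have hsplit : k * (A : ℤ) = (m : ℤ) * (k * x.val) + (d : ℤ) * (k * y.val) := by
        push_cast [hA]
        ring
      rw [hsplit, zpow_add₀ (zeta_ne_zero N)]
      congr 1
      · rw [hN]; exact zeta_mul_pow d m hd0 hm0 _
      · rw [hN, mul_comm d m]; exact zeta_mul_pow m d hm0 hd0 _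
    rw [hJ, hz]
    push_cast
    ring
  -- the bijection
  have hbij : Function.Bijective
      (fun p : ZMod d × ZMod m => ((m * p.1.val + d * p.2.val : ℕ) : ZMod N)) := by
    rw [Fintype.bijective_iff_injective_and_card]
    constructor
    · intro p q h
      dsimp only at h
      have hud : IsUnit ((m : ℕ) : ZMod d) :=
        ⟨ZMod.unitOfCoprime m hcop.symm, ZMod.coe_unitOfCoprime m hcop.symm⟩
      have hum : IsUnit ((d : ℕ) : ZMod m) :=
        ⟨ZMod.unitOfCoprime d hcop, ZMod.coe_unitOfCoprime d hcop⟩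
      have h1 : ((m : ℕ) : ZMod d) * p.1 = ((m : ℕ) : ZMod d) * q.1 := by
        have := congrArg (ZMod.castHom (dvd_mul_right d m) (ZMod d)) h
        simp only [map_natCast] at this
        simpa [Nat.cast_add, Nat.cast_mul, ZMod.natCast_self, ZMod.natCast_val,
          ZMod.cast_id, zero_mul, add_zero] using this
      have h2 : ((d : ℕ) : ZMod m) * p.2 = ((d : ℕ) : ZMod m) * q.2 := by
        have := congrArg (ZMod.castHom (dvd_mul_left m d) (ZMod m)) h
        simp only [map_natCast] at this
        simpa [Nat.cast_add, Nat.cast_mul, ZMod.natCast_self, ZMod.natCast_val,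
          ZMod.cast_id, zero_mul, add_zero] using this
      exact Prod.ext (hud.mul_left_cancel h1) (hum.mul_left_cancel h2)
    · simp [ZMod.card, hN]
  have hsum : gaussSum' N k
      = ∑ p : ZMod d × ZMod m,
          (jacobiSym ((((m * p.1.val + d * p.2.val : ℕ) : ZMod N)).val : ℤ) N : ℂ)
            * zeta N ^ (k * (((m * p.1.val + d * p.2.val : ℕ) : ZMod N)).val) := by
    rw [gaussSum'_eq]
    exact (Fintype.sum_bijective _ hbij _ _ (fun p => rfl)).symm
  -- reciprocity sign
  have hrec : (jacobiSym m d * jacobiSym d m : ℤ) = (-1) ^ ((d - 1) * (m - 1) / 4) := by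
    rw [jacobiSym.quadratic_reciprocity hmodd hdodd, mul_assoc, ← sq,
      jacobiSym.sq_one (by rw [Int.gcd_natCast_natCast]; exact hcop), mul_one]
    congr 1
    obtain ⟨s, hs⟩ := hdodd
    obtain ⟨t, ht⟩ := hmodd
    subst hs ht
    have h1 : (2 * t + 1) / 2 = t := by omega
    have h2 : (2 * s + 1) / 2 = s := by omega
    have h3 : (2 * s + 1 - 1) * (2 * t + 1 - 1) / 4 = s * t := by
      have e : (2 * s + 1 - 1) * (2 * t + 1 - 1) = 4 * (s * t) := by
        have e1 : 2 * s + 1 - 1 = 2 * s := by omega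
        have e2 : 2 * t + 1 - 1 = 2 * t := by omega
        rw [e1, e2]; ring
      rw [e, Nat.mul_div_cancel_left _ (by norm_num)]
    rw [h1, h2, h3, Nat.mul_comm]
  calc gaussSum' N k
      = ∑ p : ZMod d × ZMod m, ((jacobiSym m d * jacobiSym d m : ℤ) : ℂ)
          * ((jacobiSym (p.1.val : ℤ) d : ℂ) * zeta d ^ (k * p.1.val))
          * ((jacobiSym (p.2.val : ℤ) m : ℂ) * zeta m ^ (k * p.2.val)) := by
        rw [hsum]; exact Finset.sum_congr rfl fun p _ => key p
    _ = ((jacobiSym m d * jacobiSym d m : ℤ) : ℂ)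
          * (∑ x : ZMod d, (jacobiSym (x.val : ℤ) d : ℂ) * zeta d ^ (k * x.val))
          * (∑ y : ZMod m, (jacobiSym (y.val : ℤ) m : ℂ) * zeta m ^ (k * y.val)) := by
        rw [Fintype.sum_prod_type]
        simp_rw [← Finset.mul_sum, ← Finset.sum_mul]
        rw [← Finset.mul_sum]
    _ = (-1 : ℂ) ^ ((d - 1) * (m - 1) / 4) * gaussSum' d k * gaussSum' m k := by
        rw [hrec, ← gaussSum'_eq, ← gaussSum'_eq]
        push_cast
        ring
end

section
/- Let d ≥ 5 be odd and squarefree, G_d = G_{d,⌊φ(d)/4⌋}, and Ψ_d the Gauss–Kraïtchik polynomial of degree d' = φ(d)/2 with leading coefficient 2. If x > 2G_d is real, then Ψ_d(x) ≥ 2x^{d'}(1 − Σ_{n=1}^{d'} (G_d/x)^n) > 0. -/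
open Finset Polynomial

/-- `U_d^+(X) = Π_{(k/d)=1} (X - ζ_d^k)`. -/
noncomputable def Uplus (d : ℕ) : Polynomial ℂ :=
  ∏ k ∈ (Finset.Icc 1 d).filter (fun k : ℕ => jacobiSym (k : ℤ) d = 1),
    (Polynomial.X - Polynomial.C (zeta d ^ k))

/-- `U_d^-(X) = Π_{(k/d)=-1} (X - ζ_d^k)`. -/
noncomputable def Uminus (d : ℕ) : Polynomial ℂ :=
  ∏ k ∈ (Finset.Icc 1 d).filter (fun k : ℕ => jacobiSym (k : ℤ) d = -1),
    (Polynomial.X - Polynomial.C (zeta d ^ k))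

/-- `Ψ_d = U_d^+ + U_d^-`. -/
noncomputable def Psi (d : ℕ) : Polynomial ℂ := Uplus d + Uminus d

/-- `Ξ_d = (U_d^- - U_d^+)/√D`. -/
noncomputable def Xi (d : ℕ) : Polynomial ℂ :=
  Polynomial.C (sqrtD d)⁻¹ * (Uminus d - Uplus d)

/-- `F_{d,n} = max({φ(f)/2 : f ∣ d, 1 < f ≤ n} ∪ {|1+√D|/2})`. -/
noncomputable def Fdn (d n : ℕ) : ℝ :=
  (insert (‖1 + sqrtD d‖ / 2)
      ((d.divisors.filter fun f => 1 < f ∧ f ≤ n).image fun f => (f.totient : ℝ) / 2)).max'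
    (Finset.insert_nonempty _ _)

/-- `G_{d,n} = max({φ(f)/2 : f ∣ d, 1 < f ≤ n} ∪ {(1+√d)/2})`. -/
noncomputable def Gdn (d n : ℕ) : ℝ :=
  (insert ((1 + Real.sqrt d) / 2)
      ((d.divisors.filter fun f => 1 < f ∧ f ≤ n).image fun f => (f.totient : ℝ) / 2)).max'
    (Finset.insert_nonempty _ _)

namespace GK

variable {d : ℕ} [NeZero d]

lemma hzeta (d : ℕ) [NeZero d] : IsPrimitiveRoot (zeta d) d :=
  Complex.isPrimitiveRoot_exp d (NeZero.ne d)

/-- `e z = ζ^z.val` as a function on `ZMod d`. -/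
noncomputable def ee (d : ℕ) [NeZero d] (z : ZMod d) : ℂ := zeta d ^ z.val

lemma zeta_pow_mod (n : ℕ) : zeta d ^ (n % d) = zeta d ^ n := by
  conv_rhs => rw [← Nat.mod_add_div n d]
  rw [pow_add, pow_mul, (hzeta d).pow_eq_one, one_pow, mul_one]

lemma ee_natCast (n : ℕ) : ee d (n : ZMod d) = zeta d ^ n := by
  rw [ee, ZMod.val_natCast, zeta_pow_mod]

lemma ee_add (a b : ZMod d) : ee d (a + b) = ee d a * ee d b := by
  rw [ee, ZMod.val_add, zeta_pow_mod, pow_add]; rfl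

lemma ee_zero : ee d 0 = 1 := by
  rw [ee, ZMod.val_zero, pow_zero]

lemma ee_pow (a : ZMod d) (m : ℕ) : ee d a ^ m = ee d (a * m) := by
  have h : a * (m : ZMod d) = ((a.val * m : ℕ) : ZMod d) := by
    rw [Nat.cast_mul, ZMod.natCast_val, ZMod.cast_id]
  rw [h, ee_natCast, pow_mul, ee]

lemma ee_mul_ee_neg (a : ZMod d) : ee d a * ee d (-a) = 1 := by
  rw [← ee_add]; simp [ee_zero]

lemma ee_ne_zero (a : ZMod d) : ee d a ≠ 0 := by
  intro h
  have h2 := ee_mul_ee_neg a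
  rw [h, zero_mul] at h2; exact zero_ne_one h2

lemma abs_ee (a : ZMod d) : ‖ee d a‖ = 1 := by
  have : ‖zeta d‖ = 1 := by
    rw [zeta, Complex.norm_exp]
    have : (2 * Real.pi * Complex.I / d).re = 0 := by
      simp [Complex.div_re]
    rw [this, Real.exp_zero]
  rw [ee, norm_pow, this, one_pow]

lemma conj_ee (a : ZMod d) : (starRingEnd ℂ) (ee d a) = ee d (-a) := by
  have h1 : ee d a * (starRingEnd ℂ) (ee d a) = 1 := by
    rw [Complex.mul_conj, Complex.normSq_eq_norm_sq, abs_ee]; norm_num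
  have h2 := ee_mul_ee_neg a
  exact mul_left_cancel₀ (ee_ne_zero a) (h1.trans h2.symm)

lemma ee_eq_one_iff {a : ZMod d} : ee d a = 1 ↔ a = 0 := by
  constructor
  · intro h
    have hlt := ZMod.val_lt a
    have hdvd := ((hzeta d).pow_eq_one_iff_dvd a.val).mp h
    exact (ZMod.val_eq_zero a).mp (Nat.eq_zero_of_dvd_of_lt hdvd (ZMod.val_lt a))
  · rintro rfl; exact ee_zero

variable {d : ℕ} [NeZero d]

/-- the Jacobi character on `ZMod d`. -/
def chi (d : ℕ) [NeZero d] (z : ZMod d) : ℤ := jacobiSym z.val d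

lemma natCast_mod_int (n m : ℕ) : ((n % m : ℕ) : ℤ) = (n : ℤ) % (m : ℤ) := by
  omega

lemma chi_natCast (n : ℕ) : chi d (n : ZMod d) = jacobiSym n d := by
  rw [chi, ZMod.val_natCast]
  have h : ((n % d : ℕ) : ℤ) = (n : ℤ) % (d : ℤ) := natCast_mod_int n d
  rw [h, ← jacobiSym.mod_left]

lemma chi_mul (y z : ZMod d) : chi d (y * z) = chi d y * chi d z := by
  have h : (y * z : ZMod d) = ((y.val * z.val : ℕ) : ZMod d) := by
    rw [Nat.cast_mul, ZMod.natCast_val, ZMod.natCast_val, ZMod.cast_id, ZMod.cast_id]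
  rw [h, chi_natCast, Nat.cast_mul, jacobiSym.mul_left, chi, chi]

lemma chi_unit {z : ZMod d} (hz : IsUnit z) : chi d z = 1 ∨ chi d z = -1 := by
  have h : IsUnit ((z.val : ℕ) : ZMod d) := by
    rwa [ZMod.natCast_val, ZMod.cast_id]
  rw [ZMod.isUnit_iff_coprime] at h
  exact jacobiSym.eq_one_or_neg_one (by rw [Int.gcd_natCast_natCast]; exact h)

lemma chi_eq_zero {z : ZMod d} (hz : ¬ IsUnit z) : chi d z = 0 := by
  have h : ¬ IsUnit ((z.val : ℕ) : ZMod d) := by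
    rwa [ZMod.natCast_val, ZMod.cast_id]
  rw [ZMod.isUnit_iff_coprime] at h
  exact jacobiSym.eq_zero_iff_not_coprime.mpr (by rw [Int.gcd_natCast_natCast]; exact h)

lemma chi_one (hd : 1 < d) : chi d 1 = 1 := by
  rw [chi, ZMod.val_one_eq_one_mod]
  have : ((1 % d : ℕ) : ℤ) = 1 % (d : ℤ) := by push_cast; rfl
  rw [this, ← jacobiSym.mod_left, jacobiSym.one_left]

lemma chi_sq {z : ZMod d} (hz : IsUnit z) : (chi d z : ℂ) * (chi d z : ℂ) = 1 := by
  rcases chi_unit hz with h | h <;> rw [h] <;> norm_num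

/-- Existence of a unit `u ≡ 1 mod d/p` with `χ(u) = -1`. -/
lemma nonres (hodd : Odd d) (hsf : Squarefree d) {p : ℕ} (hp : p.Prime) (hpd : p ∣ d) :
    ∃ u : ZMod d, IsUnit u ∧ chi d u = -1 ∧
      ∀ s : ℕ, p ∣ s → (u - 1) * (s : ZMod d) = 0 := by
  haveI := Fact.mk hp
  set t := d / p with ht
  have hdt : d = p * t := (Nat.mul_div_cancel' hpd).symm
  have hcop : Nat.Coprime p t := by
    have := hsf
    rw [hdt, Nat.squarefree_mul_iff] at this
    exact this.1
  have hp2 : p ≠ 2 := by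
    rintro rfl
    rcases hodd with ⟨k, hk⟩
    omega
  obtain ⟨b0, hb0⟩ := FiniteField.exists_nonsquare (F := ZMod p)
    (by rwa [ZMod.ringChar_zmod_n])
  have hbcast : ((b0.val : ℤ) : ZMod p) = b0 := by
    push_cast
    rw [ZMod.natCast_val, ZMod.cast_id]
  have hleg : legendreSym p (b0.val : ℤ) = -1 := by
    rw [legendreSym.eq_neg_one_iff, hbcast]; exact hb0
  obtain ⟨u0, hu1, hu2⟩ := Nat.chineseRemainder hcop b0.val 1
  have htne : t ≠ 0 := by
    intro h; exact (NeZero.ne d) (by rw [hdt, h, mul_zero])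
  have hJ : jacobiSym (u0 : ℤ) d = -1 := by
    have h1 : jacobiSym (u0 : ℤ) d = jacobiSym (u0 : ℤ) p * jacobiSym (u0 : ℤ) t := by
      rw [hdt]; exact jacobiSym.mul_right' _ hp.ne_zero htne
    have h2 : jacobiSym (u0 : ℤ) p = -1 := by
      rw [jacobiSym.mod_left' (a₂ := (b0.val : ℤ)) ?_, ← jacobiSym.legendreSym.to_jacobiSym, hleg]
      rw [← natCast_mod_int, ← natCast_mod_int]
      exact congrArg (Nat.cast : ℕ → ℤ) hu1
    have h3 : jacobiSym (u0 : ℤ) t = 1 := by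
      rw [jacobiSym.mod_left' (a₂ := (1 : ℤ)) ?_, jacobiSym.one_left]
      rw [show (1 : ℤ) = ((1 : ℕ) : ℤ) by norm_num, ← natCast_mod_int, ← natCast_mod_int]
      exact congrArg (Nat.cast : ℕ → ℤ) hu2
    rw [h1, h2, h3]; ring
  refine ⟨(u0 : ZMod d), ?_, ?_, ?_⟩
  · rw [ZMod.isUnit_iff_coprime]
    by_contra h
    have h0 : jacobiSym (u0 : ℤ) d = 0 :=
      jacobiSym.eq_zero_iff_not_coprime.mpr (by rw [Int.gcd_natCast_natCast]; exact h)
    rw [h0] at hJ; norm_num at hJ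
  · rw [chi_natCast]; exact hJ
  · intro s hs
    have hmod : u0 * s ≡ s [MOD d] := by
      rw [hdt]
      refine (Nat.modEq_and_modEq_iff_modEq_mul hcop).mp ⟨?_, ?_⟩
      · obtain ⟨c, rfl⟩ := hs
        calc u0 * (p * c) ≡ 0 [MOD p] := (Nat.modEq_zero_iff_dvd).mpr ⟨u0 * c, by ring⟩
          _ ≡ p * c [MOD p] := ((Nat.modEq_zero_iff_dvd).mpr ⟨c, rfl⟩).symm
      · calc u0 * s ≡ 1 * s [MOD t] := hu2.mul_right s
          _ = s := one_mul s
    have : ((u0 * s : ℕ) : ZMod d) = ((s : ℕ) : ZMod d) :=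
      (ZMod.natCast_eq_natCast_iff _ _ _).mpr hmod
    push_cast at this
    rw [sub_mul, one_mul, this, sub_self]

/-- units of `ZMod d` as a finset. -/
def unitsF (d : ℕ) [NeZero d] : Finset (ZMod d) :=
  univ.filter (fun z => Nat.Coprime z.val d)

lemma coprime_iff_isUnit {z : ZMod d} : Nat.Coprime z.val d ↔ IsUnit z := by
  have h : ((z.val : ℕ) : ZMod d) = z := by rw [ZMod.natCast_val, ZMod.cast_id]
  rw [← ZMod.isUnit_iff_coprime, h]

lemma mem_unitsF {z : ZMod d} : z ∈ unitsF d ↔ IsUnit z := by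
  rw [unitsF, Finset.mem_filter, coprime_iff_isUnit]
  simp

lemma vanish {S : Finset (ZMod d)} {g : ZMod d → ℂ} {u : ZMod d}
    (hu : IsUnit u) (hchi : chi d u = -1) (hclose : ∀ z ∈ S, u * z ∈ S)
    (hg : ∀ z ∈ S, g (u * z) = g z) :
    ∑ z ∈ S, (chi d z : ℂ) * g z = 0 := by
  have hinj : Function.Injective (fun z : ZMod d => u * z) := fun a b h => by
    rcases hu with ⟨v, rfl⟩
    simpa using congrArg (fun w => ((v⁻¹ : (ZMod d)ˣ) : ZMod d) * w) h
  have himg : S.image (fun z => u * z) = S := by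
    refine Finset.eq_of_subset_of_card_le ?_ ?_
    · intro w hw
      obtain ⟨z, hz, rfl⟩ := Finset.mem_image.mp hw
      exact hclose z hz
    · rw [Finset.card_image_of_injective _ hinj]
  have h1 : ∑ z ∈ S, (chi d z : ℂ) * g z = ∑ z ∈ S, (chi d (u * z) : ℂ) * g (u * z) := by
    conv_lhs => rw [← himg]
    rw [Finset.sum_image (fun a _ b _ h => hinj h)]
  have h2 : ∀ z ∈ S, (chi d (u * z) : ℂ) * g (u * z) = -((chi d z : ℂ) * g z) := by
    intro z hz
    rw [hg z hz, chi_mul, hchi]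
    push_cast; ring
  rw [Finset.sum_congr rfl h2, Finset.sum_neg_distrib] at h1
  have h3 : (2 : ℂ) * ∑ z ∈ S, (chi d z : ℂ) * g z = 0 := by linear_combination h1
  rcases mul_eq_zero.mp h3 with h | h
  · norm_num at h
  · exact h

lemma geom_ee {t : ℕ} (ht : t ∣ d) (a : ZMod d) :
    ∑ w ∈ range (d / t), ee d (a * t) ^ w
      = if a * t = 0 then ((d / t : ℕ) : ℂ) else 0 := by
  by_cases h0 : a * (t : ZMod d) = 0
  · rw [if_pos h0, h0, ee_zero]
    simp
  · rw [if_neg h0]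
    have hx1 : ee d (a * t) ≠ 1 := fun h => h0 (ee_eq_one_iff.mp h)
    have hxh : ee d (a * t) ^ (d / t) = 1 := by
      rw [ee_pow]
      have : a * (t : ZMod d) * ((d / t : ℕ) : ZMod d) = a * ((d : ℕ) : ZMod d) := by
        rw [mul_assoc, ← Nat.cast_mul, Nat.mul_div_cancel' ht]
      rw [this, ZMod.natCast_self, mul_zero, ee_zero]
    rw [geom_sum_eq hx1, hxh, sub_self, zero_div]

/-- Ramanujan-type sum. -/
noncomputable def cc (d : ℕ) [NeZero d] (a : ZMod d) : ℂ :=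
  ∑ z ∈ unitsF d, ee d (a * z)

open ArithmeticFunction in
lemma cc_formula (a : ZMod d) :
    cc d a = ∑ t ∈ d.divisors, (moebius t : ℂ) *
      (if a * t = 0 then ((d / t : ℕ) : ℂ) else 0) := by
  have step1 : cc d a
      = ∑ z ∈ (univ : Finset (ZMod d)),
          (if Nat.Coprime z.val d then (1:ℂ) else 0) * ee d (a * z) := by
    rw [cc, unitsF, Finset.sum_filter]
    refine Finset.sum_congr rfl fun z _ => ?_
    by_cases h : Nat.Coprime z.val d <;> simp [h]
  have step2 : ∀ z : ZMod d, (if Nat.Coprime z.val d then (1:ℂ) else 0)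
      = ∑ t ∈ (Nat.gcd z.val d).divisors, (moebius t : ℂ) := by
    intro z
    have h1 : ∑ t ∈ (Nat.gcd z.val d).divisors, moebius t
        = if Nat.gcd z.val d = 1 then 1 else 0 := by
      have h0 : (moebius * ↑ArithmeticFunction.zeta : ArithmeticFunction ℤ) (Nat.gcd z.val d)
          = (1 : ArithmeticFunction ℤ) (Nat.gcd z.val d) := by
        rw [moebius_mul_coe_zeta]
      rwa [coe_mul_zeta_apply, one_apply] at h0
    have h2 := congrArg (fun n : ℤ => (n : ℂ)) h1
    push_cast at h2
    rw [h2]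
  have step3 : ∀ z : ZMod d, ∑ t ∈ (Nat.gcd z.val d).divisors, (moebius t : ℂ)
      = ∑ t ∈ d.divisors, (if t ∣ z.val then (moebius t : ℂ) else 0) := by
    intro z
    rw [← Finset.sum_filter]
    refine (Finset.sum_congr ?_ fun _ _ => rfl).symm
    ext t
    simp only [Finset.mem_filter, Nat.mem_divisors]
    constructor
    · rintro ⟨⟨htd, hd0⟩, htz⟩
      exact ⟨Nat.dvd_gcd htz htd, fun h => NeZero.ne d (Nat.eq_zero_of_gcd_eq_zero_right h)⟩
    · rintro ⟨htg, hg0⟩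
      exact ⟨⟨(Nat.dvd_gcd_iff.mp htg).2, NeZero.ne d⟩, (Nat.dvd_gcd_iff.mp htg).1⟩
  have step4 : cc d a = ∑ t ∈ d.divisors, (moebius t : ℂ) *
      ∑ z ∈ univ.filter (fun z : ZMod d => t ∣ z.val), ee d (a * z) := by
    rw [step1]
    simp_rw [step2, step3, Finset.sum_mul]
    rw [Finset.sum_comm]
    refine Finset.sum_congr rfl fun t _ => ?_
    rw [Finset.mul_sum, Finset.sum_filter]
    refine Finset.sum_congr rfl fun z _ => ?_
    by_cases h : t ∣ z.val <;> simp [h]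
  rw [step4]
  refine Finset.sum_congr rfl fun t htmem => ?_
  rw [Nat.mem_divisors] at htmem
  obtain ⟨htd, hd0⟩ := htmem
  have ht0 : 0 < t := by
    rcases Nat.eq_zero_or_pos t with h | h
    · exfalso; rw [h] at htd; exact hd0 (Nat.eq_zero_of_zero_dvd htd)
    · exact h
  congr 1
  rw [← geom_ee htd a]
  refine (Finset.sum_nbij' (i := fun w => ((t * w : ℕ) : ZMod d))
    (j := fun z => z.val / t) ?_ ?_ ?_ ?_ ?_).symm
  · intro w hw
    rw [Finset.mem_range] at hw
    have hlt : t * w < d := by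
      calc t * w < t * (d / t) := mul_lt_mul_of_pos_left hw ht0
        _ = d := Nat.mul_div_cancel' htd
    simp only [Finset.mem_filter, Finset.mem_univ, true_and]
    rw [ZMod.val_natCast_of_lt hlt]
    exact Dvd.intro w rfl
  · intro z hz
    rw [Finset.mem_filter] at hz
    rw [Finset.mem_range]
    by_contra h
    push_neg at h
    have : d ≤ z.val := by
      calc d = t * (d / t) := (Nat.mul_div_cancel' htd).symm
        _ ≤ t * (z.val / t) := Nat.mul_le_mul_left t h
        _ = z.val := Nat.mul_div_cancel' hz.2
    exact absurd (ZMod.val_lt z) (not_lt.mpr this)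
  · intro w hw
    rw [Finset.mem_range] at hw
    have hlt : t * w < d := by
      calc t * w < t * (d / t) := mul_lt_mul_of_pos_left hw ht0
        _ = d := Nat.mul_div_cancel' htd
    show (((t * w : ℕ) : ZMod d)).val / t = w
    rw [ZMod.val_natCast_of_lt hlt]
    exact Nat.mul_div_cancel_left w ht0
  · intro z hz
    rw [Finset.mem_filter] at hz
    show ((t * (z.val / t) : ℕ) : ZMod d) = z
    rw [Nat.mul_div_cancel' hz.2, ZMod.natCast_val, ZMod.cast_id]
  · intro w hw
    show ee d (a * t) ^ w = ee d (a * ((t * w : ℕ) : ZMod d))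
    rw [ee_pow]
    congr 1
    push_cast
    ring

open ArithmeticFunction in
lemma totient_moebius (n : ℕ) (hn : 0 < n) :
    ∑ s ∈ n.divisors, (moebius (n / s) : ℂ) * s = (n.totient : ℂ) := by
  have key := (sum_eq_iff_sum_smul_moebius_eq
    (R := ℂ) (f := fun k => (k.totient : ℂ)) (g := fun k => (k : ℂ))).mp ?_ n hn
  · rw [← Nat.sum_divisorsAntidiagonal' (f := fun a b => (moebius a : ℂ) * b)]
    rw [← key]
    refine Finset.sum_congr rfl fun x _ => ?_
    rw [zsmul_eq_mul]
  · intro m hm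
    rw [← Nat.cast_sum]
    norm_cast
    exact Nat.sum_totient m

open ArithmeticFunction in
lemma abs_moebius_le (n : ℕ) : ‖(moebius n : ℂ)‖ ≤ 1 := by
  by_cases h : Squarefree n
  · rw [moebius_apply_of_squarefree h]
    push_cast
    rw [norm_pow, norm_neg, norm_one, one_pow]
  · rw [moebius_eq_zero_of_not_squarefree h]
    simp

open ArithmeticFunction in
lemma cc_eval (hsf : Squarefree d) (m : ℕ) :
    cc d ((m : ℕ) : ZMod d) =
      (moebius (d / Nat.gcd d m) : ℂ) * ((Nat.gcd d m).totient : ℂ) := by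
  set g := Nat.gcd d m with hg
  have hgd : g ∣ d := Nat.gcd_dvd_left d m
  have hg0 : 0 < g := Nat.gcd_pos_of_pos_left m (Nat.pos_of_ne_zero (NeZero.ne d))
  have h1 : cc d ((m : ℕ) : ZMod d)
      = ∑ t ∈ d.divisors, (moebius t : ℂ) * (if (d / t) ∣ m then ((d / t : ℕ) : ℂ) else 0) := by
    rw [cc_formula]
    refine Finset.sum_congr rfl fun t ht => ?_
    rw [Nat.mem_divisors] at ht
    have ht0 : 0 < t := Nat.pos_of_dvd_of_pos ht.1 (Nat.pos_of_ne_zero (NeZero.ne d))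
    congr 1
    have hcond : ((m : ZMod d) * (t : ZMod d) = 0) ↔ (d / t) ∣ m := by
      rw [← Nat.cast_mul, ZMod.natCast_eq_zero_iff]
      constructor
      · intro h
        have h2 : (d / t) * t ∣ m * t := by rwa [Nat.div_mul_cancel ht.1]
        exact (Nat.mul_dvd_mul_iff_right ht0).mp h2
      · intro h
        have h2 : (d / t) * t ∣ m * t := Nat.mul_dvd_mul h dvd_rfl
        rwa [Nat.div_mul_cancel ht.1] at h2
    by_cases h : (d / t) ∣ m
    · rw [if_pos h, if_pos (hcond.mpr h)]
    · rw [if_neg h, if_neg (fun hc => h (hcond.mp hc))]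
  have h2 : cc d ((m : ℕ) : ZMod d)
      = ∑ s ∈ d.divisors, (moebius (d / s) : ℂ) * (if s ∣ m then (s : ℂ) else 0) := by
    rw [h1, ← Nat.sum_div_divisors d
      (fun s => (moebius (d / s) : ℂ) * (if s ∣ m then (s : ℂ) else 0))]
    refine Finset.sum_congr rfl fun t ht => ?_
    rw [Nat.mem_divisors] at ht
    rw [Nat.div_div_self ht.1 ht.2]
  have h3 : cc d ((m : ℕ) : ZMod d)
      = ∑ s ∈ g.divisors, (moebius (d / s) : ℂ) * (s : ℂ) := by
    rw [h2]
    rw [← Finset.sum_filter_add_sum_filter_not d.divisors (fun s => s ∣ m)]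
    have hz : ∑ s ∈ d.divisors.filter (fun s => ¬ s ∣ m),
        (moebius (d / s) : ℂ) * (if s ∣ m then (s : ℂ) else 0) = 0 := by
      refine Finset.sum_eq_zero fun s hs => ?_
      rw [Finset.mem_filter] at hs
      rw [if_neg hs.2, mul_zero]
    rw [hz, add_zero]
    have hset : d.divisors.filter (fun s => s ∣ m) = g.divisors := by
      ext s
      simp only [Finset.mem_filter, Nat.mem_divisors]
      constructor
      · rintro ⟨⟨h1', h2'⟩, h3'⟩
        exact ⟨Nat.dvd_gcd h1' h3', by omega⟩
      · rintro ⟨hsg, _⟩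
        exact ⟨⟨hsg.trans hgd, NeZero.ne d⟩, hsg.trans (Nat.gcd_dvd_right d m)⟩
    rw [hset]
    refine Finset.sum_congr rfl fun s hs => ?_
    rw [Nat.mem_divisors] at hs
    rw [if_pos (hs.1.trans (Nat.gcd_dvd_right d m))]
  rw [h3]
  have h4 : ∀ s ∈ g.divisors, (moebius (d / s) : ℂ) * (s : ℂ)
      = (moebius (d / g) : ℂ) * ((moebius (g / s) : ℂ) * (s : ℂ)) := by
    intro s hs
    rw [Nat.mem_divisors] at hs
    obtain ⟨hsg, -⟩ := hs
    have hs0 : 0 < s := Nat.pos_of_dvd_of_pos hsg hg0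
    have hsd : s ∣ d := hsg.trans hgd
    have hds : d / s = (d / g) * (g / s) := by
      refine Nat.div_eq_of_eq_mul_left hs0 ?_
      rw [mul_assoc, Nat.div_mul_cancel hsg, Nat.div_mul_cancel hgd]
    have hsq : Squarefree (d / s) := hsf.squarefree_of_dvd (Nat.div_dvd_of_dvd hsd)
    rw [hds] at hsq
    have hcop : Nat.Coprime (d / g) (g / s) := (Nat.squarefree_mul_iff.mp hsq).1
    rw [hds, isMultiplicative_moebius.map_mul_of_coprime hcop]
    push_cast
    ring
  rw [Finset.sum_congr rfl h4, ← Finset.mul_sum, totient_moebius g hg0]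

/-- twisted Gauss-type sum. -/
noncomputable def TT (d : ℕ) [NeZero d] (a : ZMod d) : ℂ :=
  ∑ z ∈ unitsF d, (chi d z : ℂ) * ee d (a * z)

lemma sum_unitsF_mul (u : (ZMod d)ˣ) (F : ZMod d → ℂ) :
    ∑ y ∈ unitsF d, F y = ∑ w ∈ unitsF d, F (w * u) := by
  refine Finset.sum_nbij' (i := fun y => y * ((u⁻¹ : (ZMod d)ˣ) : ZMod d))
    (j := fun w => w * (u : ZMod d)) ?_ ?_ ?_ ?_ ?_
  · intro y hy
    rw [mem_unitsF] at hy ⊢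
    exact hy.mul (Units.isUnit _)
  · intro w hw
    rw [mem_unitsF] at hw ⊢
    exact hw.mul (Units.isUnit _)
  · intro y _
    show y * ↑u⁻¹ * ↑u = y
    rw [mul_assoc, Units.inv_mul, mul_one]
  · intro w _
    show w * ↑u * ↑u⁻¹ = w
    rw [mul_assoc, Units.mul_inv, mul_one]
  · intro y _
    show F y = F (y * ↑u⁻¹ * ↑u)
    rw [mul_assoc, Units.inv_mul, mul_one]

lemma TT_eq_zero (hodd : Odd d) (hsf : Squarefree d) {m p : ℕ}
    (hp : p.Prime) (hpd : p ∣ d) (hpm : p ∣ m) :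
    TT d ((m : ℕ) : ZMod d) = 0 := by
  obtain ⟨u, hu, huchi, hucong⟩ := nonres hodd hsf hp hpd
  refine vanish hu huchi ?_ ?_
  · intro z hz
    rw [mem_unitsF] at hz ⊢
    exact hu.mul hz
  · intro z hz
    congr 1
    have h0 : (u - 1) * ((m : ℕ) : ZMod d) = 0 := hucong m hpm
    have : ((m : ℕ) : ZMod d) * (u * z) = ((m : ℕ) : ZMod d) * z + ((u - 1) * ((m : ℕ) : ZMod d)) * z := by
      ring
    rw [this, h0, zero_mul, add_zero]

lemma one_mem_unitsF : (1 : ZMod d) ∈ unitsF d := by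
  rw [mem_unitsF]; exact isUnit_one

open ArithmeticFunction in
lemma TT_mul_conj (hd : 5 ≤ d) (hodd : Odd d) (hsf : Squarefree d) {a : ZMod d}
    (ha : IsUnit a) :
    TT d a * (starRingEnd ℂ) (TT d a) = (d : ℂ) := by
  have hd1 : 1 < d := by omega
  have hconj : (starRingEnd ℂ) (TT d a) = ∑ z ∈ unitsF d, (chi d z : ℂ) * ee d (-(a * z)) := by
    rw [TT, map_sum]
    refine Finset.sum_congr rfl fun z _ => ?_
    rw [map_mul, conj_ee, map_intCast]
  rw [hconj, TT, Finset.sum_mul_sum]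
  have hstep : ∀ z ∈ unitsF d,
      ∑ y ∈ unitsF d, ((chi d y : ℂ) * ee d (a * y)) * ((chi d z : ℂ) * ee d (-(a * z)))
        = ∑ w ∈ unitsF d, (chi d w : ℂ) * ee d ((a * w - a) * z) := by
    intro z hz
    rw [mem_unitsF] at hz
    rw [sum_unitsF_mul hz.unit
      (fun y => ((chi d y : ℂ) * ee d (a * y)) * ((chi d z : ℂ) * ee d (-(a * z))))]
    refine Finset.sum_congr rfl fun w hw => ?_
    have hzz : ((hz.unit : (ZMod d)ˣ) : ZMod d) = z := rfl
    rw [hzz, chi_mul]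
    have hee : ee d (a * (w * z)) * ee d (-(a * z)) = ee d ((a * w - a) * z) := by
      rw [← ee_add]
      congr 1
      ring
    push_cast
    calc (chi d w : ℂ) * (chi d z : ℂ) * ee d (a * (w * z)) * ((chi d z : ℂ) * ee d (-(a * z)))
        = ((chi d z : ℂ) * (chi d z : ℂ)) * ((chi d w : ℂ) * (ee d (a * (w * z)) * ee d (-(a * z)))) := by
          ring
      _ = (chi d w : ℂ) * ee d ((a * w - a) * z) := by
          rw [chi_sq hz, hee, one_mul]
  rw [Finset.sum_comm, Finset.sum_congr rfl hstep, Finset.sum_comm]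
  have hcc : ∀ w : ZMod d, ∑ z ∈ unitsF d, (chi d w : ℂ) * ee d ((a * w - a) * z)
      = (chi d w : ℂ) * cc d (a * w - a) := by
    intro w
    rw [cc, Finset.mul_sum]
  rw [Finset.sum_congr rfl (fun w _ => hcc w)]
  have hexp : ∀ w : ZMod d, (chi d w : ℂ) * cc d (a * w - a)
      = ∑ t ∈ d.divisors, (moebius t : ℂ) *
          (if (a * w - a) * t = 0 then ((d / t : ℕ) : ℂ) else 0) * (chi d w : ℂ) := by
    intro w
    rw [cc_formula, Finset.mul_sum]
    refine Finset.sum_congr rfl fun t _ => ?_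
    ring
  rw [Finset.sum_congr rfl (fun w _ => hexp w), Finset.sum_comm]
  have hinner : ∀ t ∈ d.divisors,
      ∑ w ∈ unitsF d, (moebius t : ℂ) *
          (if (a * w - a) * t = 0 then ((d / t : ℕ) : ℂ) else 0) * (chi d w : ℂ)
        = if t = 1 then (d : ℂ) else 0 := by
    intro t htmem
    rw [Nat.mem_divisors] at htmem
    have hsum : ∑ w ∈ unitsF d, (moebius t : ℂ) *
          (if (a * w - a) * t = 0 then ((d / t : ℕ) : ℂ) else 0) * (chi d w : ℂ)
        = (moebius t : ℂ) * ((d / t : ℕ) : ℂ) *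
          ∑ w ∈ (unitsF d).filter (fun w => (a * w - a) * t = 0), (chi d w : ℂ) := by
      rw [Finset.mul_sum, Finset.sum_filter]
      refine Finset.sum_congr rfl fun w _ => ?_
      by_cases hcase : (a * w - a) * (t : ZMod d) = 0
      · rw [if_pos hcase, if_pos hcase]; try ring
      · rw [if_neg hcase, if_neg hcase]; try ring
    rw [hsum]
    by_cases ht1 : t = 1
    · subst ht1
      have hfilt : (unitsF d).filter (fun w => (a * w - a) * ((1:ℕ) : ZMod d) = 0)
          = {1} := by
        ext w
        simp only [Finset.mem_filter, Finset.mem_singleton]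
        constructor
        · rintro ⟨hwu, hcond⟩
          rw [Nat.cast_one, mul_one] at hcond
          have : a * (w - 1) = 0 := by rw [mul_sub, mul_one]; exact hcond
          have hw1 : w - 1 = 0 := by
            rcases ha with ⟨v, rfl⟩
            have := congrArg (fun x => ((v⁻¹ : (ZMod d)ˣ) : ZMod d) * x) this
            simpa [← mul_assoc] using this
          have := sub_eq_zero.mp hw1
          exact this
        · rintro rfl
          refine ⟨one_mem_unitsF, ?_⟩
          simp
      rw [hfilt, Finset.sum_singleton, chi_one hd1, if_pos rfl]
      simp [ArithmeticFunction.moebius_apply_one]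
    · rw [if_neg ht1]
      have ht0 : t ≠ 0 := fun h => htmem.2 (by rw [h] at htmem; exact Nat.eq_zero_of_zero_dvd htmem.1)
      have hpp : t.minFac.Prime := Nat.minFac_prime ht1
      obtain ⟨u, hu, huchi, hucong⟩ := nonres hodd hsf hpp ((Nat.minFac_dvd t).trans htmem.1)
      have hvan : ∑ w ∈ (unitsF d).filter (fun w => (a * w - a) * t = 0),
          (chi d w : ℂ) * (1 : ℂ) = 0 := by
        refine vanish hu huchi ?_ ?_
        · intro z hzmem
          rw [Finset.mem_filter] at hzmem ⊢
          obtain ⟨hz1, hz2⟩ := hzmem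
          rw [mem_unitsF] at hz1
          refine ⟨by rw [mem_unitsF]; exact hu.mul hz1, ?_⟩
          have h0 : (u - 1) * ((t : ℕ) : ZMod d) = 0 := hucong t (Nat.minFac_dvd t)
          have hexpand : (a * (u * z) - a) * (t : ZMod d)
              = u * ((a * z - a) * t) + a * ((u - 1) * t) := by ring
          rw [hexpand, hz2, h0, mul_zero, mul_zero, add_zero]
        · intro z _; rfl
      simp only [mul_one] at hvan
      rw [hvan, mul_zero]
  rw [Finset.sum_congr rfl hinner, Finset.sum_ite_eq' d.divisors 1 (fun _ => (d : ℂ))]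
  rw [if_pos (Nat.one_mem_divisors.mpr (by omega))]

lemma abs_TT (hd : 5 ≤ d) (hodd : Odd d) (hsf : Squarefree d) {a : ZMod d} (ha : IsUnit a) :
    ‖TT d a‖ = Real.sqrt d := by
  have h := TT_mul_conj hd hodd hsf ha
  rw [Complex.mul_conj] at h
  have h2 : Complex.normSq (TT d a) = (d : ℝ) := by
    have : ((Complex.normSq (TT d a) : ℝ) : ℂ) = ((d : ℝ) : ℂ) := by
      rw [h]; norm_num
    exact_mod_cast this
  rw [Complex.norm_def, h2]

/-- residue/nonresidue sets. -/
def Aset (d : ℕ) [NeZero d] (ε : ℤ) : Finset (ZMod d) :=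
  univ.filter (fun z => chi d z = ε)

lemma Aset_eq_filter_unitsF {ε : ℤ} (hε : ε = 1 ∨ ε = -1) :
    Aset d ε = (unitsF d).filter (fun z => chi d z = ε) := by
  ext z
  simp only [Aset, Finset.mem_filter, Finset.mem_univ, true_and, mem_unitsF]
  constructor
  · intro h
    refine ⟨?_, h⟩
    by_contra hz
    rw [chi_eq_zero hz] at h
    rcases hε with rfl | rfl <;> simp at h
  · exact fun h => h.2

lemma PP_split_plus (m : ℕ) :
    (2 : ℂ) * ∑ z ∈ Aset d 1, ee d z ^ m
      = cc d ((m : ℕ) : ZMod d) + TT d ((m : ℕ) : ZMod d) := by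
  have hsplit := Finset.sum_filter_add_sum_filter_not (unitsF d)
    (fun z => chi d z = 1)
    (fun z => ((1 : ℂ) + (chi d z : ℂ)) * ee d (((m : ℕ) : ZMod d) * z))
  have h1 : ∑ z ∈ (unitsF d).filter (fun z => chi d z = 1),
      ((1 : ℂ) + (chi d z : ℂ)) * ee d (((m : ℕ) : ZMod d) * z)
      = 2 * ∑ z ∈ Aset d 1, ee d z ^ m := by
    rw [Aset_eq_filter_unitsF (Or.inl rfl), Finset.mul_sum]
    refine Finset.sum_congr rfl fun z hz => ?_
    rw [Finset.mem_filter] at hz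
    rw [hz.2, ee_pow, mul_comm z]
    push_cast
    ring
  have h2 : ∑ z ∈ (unitsF d).filter (fun z => ¬ chi d z = 1),
      ((1 : ℂ) + (chi d z : ℂ)) * ee d (((m : ℕ) : ZMod d) * z) = 0 := by
    refine Finset.sum_eq_zero fun z hz => ?_
    rw [Finset.mem_filter, mem_unitsF] at hz
    have : chi d z = -1 := (chi_unit hz.1).resolve_left hz.2
    rw [this]
    push_cast
    ring
  have h3 : ∑ z ∈ unitsF d,
      ((1 : ℂ) + (chi d z : ℂ)) * ee d (((m : ℕ) : ZMod d) * z)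
      = cc d ((m : ℕ) : ZMod d) + TT d ((m : ℕ) : ZMod d) := by
    rw [cc, TT, ← Finset.sum_add_distrib]
    refine Finset.sum_congr rfl fun z _ => ?_
    ring
  rw [← h1, ← h3, ← hsplit, h2, add_zero]

lemma PP_split_minus (m : ℕ) :
    (2 : ℂ) * ∑ z ∈ Aset d (-1), ee d z ^ m
      = cc d ((m : ℕ) : ZMod d) - TT d ((m : ℕ) : ZMod d) := by
  have hsplit := Finset.sum_filter_add_sum_filter_not (unitsF d)
    (fun z => chi d z = 1)
    (fun z => ((1 : ℂ) - (chi d z : ℂ)) * ee d (((m : ℕ) : ZMod d) * z))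
  have h1 : ∑ z ∈ (unitsF d).filter (fun z => ¬ chi d z = 1),
      ((1 : ℂ) - (chi d z : ℂ)) * ee d (((m : ℕ) : ZMod d) * z)
      = 2 * ∑ z ∈ Aset d (-1), ee d z ^ m := by
    rw [Aset_eq_filter_unitsF (Or.inr rfl), Finset.mul_sum]
    have hset : (unitsF d).filter (fun z => ¬ chi d z = 1)
        = (unitsF d).filter (fun z => chi d z = -1) := by
      ext z
      simp only [Finset.mem_filter, mem_unitsF]
      constructor
      · rintro ⟨hz, h⟩; exact ⟨hz, (chi_unit hz).resolve_left h⟩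
      · rintro ⟨hz, h⟩; exact ⟨hz, by rw [h]; norm_num⟩
    rw [hset]
    refine Finset.sum_congr rfl fun z hz => ?_
    rw [Finset.mem_filter] at hz
    rw [hz.2, ee_pow, mul_comm z]
    push_cast
    ring
  have h2 : ∑ z ∈ (unitsF d).filter (fun z => chi d z = 1),
      ((1 : ℂ) - (chi d z : ℂ)) * ee d (((m : ℕ) : ZMod d) * z) = 0 := by
    refine Finset.sum_eq_zero fun z hz => ?_
    rw [Finset.mem_filter] at hz
    rw [hz.2]
    push_cast
    ring
  have h3 : ∑ z ∈ unitsF d,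
      ((1 : ℂ) - (chi d z : ℂ)) * ee d (((m : ℕ) : ZMod d) * z)
      = cc d ((m : ℕ) : ZMod d) - TT d ((m : ℕ) : ZMod d) := by
    rw [cc, TT, ← Finset.sum_sub_distrib]
    refine Finset.sum_congr rfl fun z _ => ?_
    ring
  rw [← h1, ← h3, ← hsplit, h2, zero_add]

lemma sqrt_le_Gdn (hd : 5 ≤ d) (n : ℕ) : (1 + Real.sqrt d) / 2 ≤ Gdn d n :=
  Finset.le_max' _ _ (Finset.mem_insert_self _ _)

lemma one_le_Gdn (hd : 5 ≤ d) (n : ℕ) : 1 ≤ Gdn d n := by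
  refine le_trans ?_ (sqrt_le_Gdn hd n)
  have h1 : (1:ℝ) ≤ Real.sqrt d := by
    rw [show (1:ℝ) = Real.sqrt 1 by rw [Real.sqrt_one]]
    exact Real.sqrt_le_sqrt (by exact_mod_cast by omega : (1:ℝ) ≤ d)
  linarith

lemma totient_le_Gdn (hd : 5 ≤ d) {n f : ℕ} (hf : f ∣ d) (hf1 : 1 < f) (hfn : f ≤ n) :
    (f.totient : ℝ) / 2 ≤ Gdn d n := by
  refine Finset.le_max' _ _ (Finset.mem_insert_of_mem ?_)
  exact Finset.mem_image.mpr ⟨f, Finset.mem_filter.mpr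
    ⟨Nat.mem_divisors.mpr ⟨hf, by omega⟩, hf1, hfn⟩, rfl⟩

lemma PP_abs_le (hd : 5 ≤ d) (hodd : Odd d) (hsf : Squarefree d) {m : ℕ} (hm1 : 1 ≤ m)
    (hmN : m ≤ d.totient / 4) {ε : ℤ} (hε : ε = 1 ∨ ε = -1) :
    ‖∑ z ∈ Aset d ε, ee d z ^ m‖ ≤ Gdn d (d.totient / 4) := by
  have habs : 2 * ‖∑ z ∈ Aset d ε, ee d z ^ m‖
      ≤ ‖cc d ((m : ℕ) : ZMod d)‖ + ‖TT d ((m : ℕ) : ZMod d)‖ := by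
    rcases hε with rfl | rfl
    · have h := PP_split_plus (d := d) m
      calc 2 * ‖∑ z ∈ Aset d 1, ee d z ^ m‖
          = ‖(2 : ℂ) * ∑ z ∈ Aset d 1, ee d z ^ m‖ := by
            rw [norm_mul]; norm_num
        _ = ‖cc d ((m : ℕ) : ZMod d) + TT d ((m : ℕ) : ZMod d)‖ := by rw [h]
        _ ≤ _ := norm_add_le _ _
    · have h := PP_split_minus (d := d) m
      calc 2 * ‖∑ z ∈ Aset d (-1), ee d z ^ m‖
          = ‖(2 : ℂ) * ∑ z ∈ Aset d (-1), ee d z ^ m‖ := by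
            rw [norm_mul]; norm_num
        _ = ‖cc d ((m : ℕ) : ZMod d) - TT d ((m : ℕ) : ZMod d)‖ := by rw [h]
        _ ≤ _ := by
            rw [sub_eq_add_neg]
            exact (norm_add_le _ _).trans_eq (by rw [norm_neg])
  set g := Nat.gcd d m with hgdef
  by_cases hg : g = 1
  · -- coprime case
    have hcc : ‖cc d ((m : ℕ) : ZMod d)‖ ≤ 1 := by
      rw [cc_eval hsf m, ← hgdef, hg]
      simp only [Nat.div_one, Nat.totient_one, Nat.cast_one, mul_one]
      exact abs_moebius_le d
    have hTT : ‖TT d ((m : ℕ) : ZMod d)‖ = Real.sqrt d := by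
      refine abs_TT hd hodd hsf ?_
      rw [ZMod.isUnit_iff_coprime]
      rw [Nat.Coprime, Nat.gcd_comm]
      exact hg
    have := sqrt_le_Gdn hd (d.totient / 4)
    rw [hTT] at habs
    linarith
  · -- non-coprime case
    have hg0 : 0 < g := Nat.gcd_pos_of_pos_left m (Nat.pos_of_ne_zero (NeZero.ne d))
    have hg1 : 1 < g := by omega
    have hgd : g ∣ d := Nat.gcd_dvd_left d m
    have hgm : g ∣ m := Nat.gcd_dvd_right d m
    have hp : g.minFac.Prime := Nat.minFac_prime hg
    have hTT : TT d ((m : ℕ) : ZMod d) = 0 :=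
      TT_eq_zero hodd hsf hp ((Nat.minFac_dvd g).trans hgd) ((Nat.minFac_dvd g).trans hgm)
    have hcc : ‖cc d ((m : ℕ) : ZMod d)‖ ≤ (g.totient : ℝ) := by
      rw [cc_eval hsf m, ← hgdef, norm_mul]
      calc ‖(ArithmeticFunction.moebius (d / g) : ℂ)‖ * ‖(g.totient : ℂ)‖
          ≤ 1 * ‖(g.totient : ℂ)‖ := by
            refine mul_le_mul_of_nonneg_right (abs_moebius_le _) (by positivity)
        _ = (g.totient : ℝ) := by
            rw [one_mul]
            norm_cast
    have hGg : (g.totient : ℝ) / 2 ≤ Gdn d (d.totient / 4) :=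
      totient_le_Gdn hd hgd hg1 ((Nat.le_of_dvd (by omega) hgm).trans hmN)
    rw [hTT] at habs
    simp only [norm_zero, add_zero] at habs
    linarith


lemma newton_rec {α : Type*} (A : Finset α) (f : α → ℂ) (n : ℕ) :
    (n : ℂ) * ∑ t ∈ A.powersetCard n, ∏ z ∈ t, f z
      = (-1)^(n+1) * ∑ a ∈ (antidiagonal n).filter (fun a => a.1 < n),
          (-1)^a.1 * (∑ t ∈ A.powersetCard a.1, ∏ z ∈ t, f z) * (∑ z ∈ A, f z ^ a.2) := by
  classical
  have h := MvPolynomial.mul_esymm_eq_sum {x // x ∈ A} ℂ n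
  have h2 := congrArg (MvPolynomial.aeval (fun i : {x // x ∈ A} => f ↑i)) h
  have hesymm : ∀ k : ℕ, (MvPolynomial.aeval (fun i : {x // x ∈ A} => f ↑i))
      (MvPolynomial.esymm {x // x ∈ A} ℂ k) = ∑ t ∈ A.powersetCard k, ∏ z ∈ t, f z := by
    intro k
    rw [MvPolynomial.aeval_esymm_eq_multiset_esymm]
    have hms : (Finset.univ.val.map fun i : {x // x ∈ A} => f ↑i) = A.val.map f := by
      rw [Finset.univ_eq_attach]
      exact Multiset.attach_map_val' A.val f
    rw [hms, Finset.esymm_map_val]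
  have hpsum : ∀ k : ℕ, (MvPolynomial.aeval (fun i : {x // x ∈ A} => f ↑i))
      (MvPolynomial.psum {x // x ∈ A} ℂ k) = ∑ z ∈ A, f z ^ k := by
    intro k
    rw [MvPolynomial.psum, map_sum]
    simp only [map_pow, MvPolynomial.aeval_X]
    rw [Finset.univ_eq_attach]
    exact Finset.sum_attach A (fun z => f z ^ k)
  simp only [map_mul, map_natCast, map_sum, map_pow, map_neg, map_one, hesymm, hpsum] at h2
  exact h2


lemma esymm_bound {α : Type*} (A : Finset α) (f : α → ℂ) (G : ℝ) (hG : 1 ≤ G) (N : ℕ)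
    (hP : ∀ m : ℕ, 1 ≤ m → m ≤ N → ‖∑ z ∈ A, f z ^ m‖ ≤ G) :
    ∀ n ≤ N, ‖∑ t ∈ A.powersetCard n, ∏ z ∈ t, f z‖ ≤ G ^ n := by
  intro n
  induction n using Nat.strong_induction_on with
  | _ n ih =>
    intro hn
    rcases Nat.eq_zero_or_pos n with rfl | hn0
    · simp
    have hkey := newton_rec A f n
    have habs : (n : ℝ) * ‖∑ t ∈ A.powersetCard n, ∏ z ∈ t, f z‖
        ≤ ∑ a ∈ (antidiagonal n).filter (fun a => a.1 < n), G ^ a.1 * G := by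
      have h1 : (n : ℝ) * ‖∑ t ∈ A.powersetCard n, ∏ z ∈ t, f z‖
          = ‖(n : ℂ) * ∑ t ∈ A.powersetCard n, ∏ z ∈ t, f z‖ := by
        rw [norm_mul, Complex.norm_natCast]
      rw [h1, hkey, norm_mul]
      have h2 : ‖(-1 : ℂ) ^ (n + 1)‖ = 1 := by
        rw [norm_pow, norm_neg, norm_one, one_pow]
      rw [h2, one_mul]
      refine (norm_sum_le _ _).trans ?_
      refine Finset.sum_le_sum fun a ha => ?_
      rw [Finset.mem_filter, Finset.HasAntidiagonal.mem_antidiagonal] at ha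
      rw [norm_mul, norm_mul, norm_pow, norm_neg, norm_one, one_pow, one_mul]
      have hE : ‖∑ t ∈ A.powersetCard a.1, ∏ z ∈ t, f z‖ ≤ G ^ a.1 :=
        ih a.1 ha.2 (le_trans (le_of_lt ha.2) hn)
      have hPa : ‖∑ z ∈ A, f z ^ a.2‖ ≤ G := by
        refine hP a.2 ?_ (by omega)
        omega
      refine mul_le_mul hE hPa (norm_nonneg _) (by positivity)
    have hsum : ∑ a ∈ (antidiagonal n).filter (fun a => a.1 < n), G ^ a.1 * G
        = ∑ j ∈ range n, G ^ j * G := by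
      refine Finset.sum_nbij' (i := fun a => a.1) (j := fun j => (j, n - j)) ?_ ?_ ?_ ?_ ?_
      · intro a ha
        rw [Finset.mem_filter] at ha
        exact Finset.mem_range.mpr ha.2
      · intro j hj
        rw [Finset.mem_range] at hj
        rw [Finset.mem_filter, Finset.HasAntidiagonal.mem_antidiagonal]
        refine ⟨show j + (n - j) = n by omega, show j < n by omega⟩
      · intro a ha
        rw [Finset.mem_filter, Finset.HasAntidiagonal.mem_antidiagonal] at ha
        have : n - a.1 = a.2 := by omega
        simp [this]
      · intro j hj
        simp
      · intro a _
        rfl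
    rw [hsum] at habs
    have hgeo : ∑ j ∈ range n, G ^ j * G ≤ (n : ℝ) * G ^ n := by
      calc ∑ j ∈ range n, G ^ j * G ≤ ∑ j ∈ range n, G ^ n := by
            refine Finset.sum_le_sum fun j hj => ?_
            rw [Finset.mem_range] at hj
            calc G ^ j * G = G ^ (j + 1) := by ring
              _ ≤ G ^ n := pow_le_pow_right₀ hG (by omega)
        _ = (n : ℝ) * G ^ n := by rw [Finset.sum_const, card_range, nsmul_eq_mul]
    have hn' : (0 : ℝ) < n := by exact_mod_cast hn0
    nlinarith [habs, hgeo]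

lemma esymm_compl {α : Type*} [DecidableEq α] (A : Finset α) (f : α → ℂ)
    (habs : ∀ z ∈ A, ‖f z‖ = 1)
    {n : ℕ} (hn : n ≤ A.card) :
    ‖∑ t ∈ A.powersetCard (A.card - n), ∏ z ∈ t, f z‖
      = ‖∑ t ∈ A.powersetCard n, ∏ z ∈ t, f z‖ := by
  have hne : ∀ z ∈ A, f z ≠ 0 := fun z hz h0 => by
    have := habs z hz; rw [h0] at this; simp at this
  have hconj : ∀ z ∈ A, (starRingEnd ℂ) (f z) = (f z)⁻¹ := by
    intro z hz
    have h1 : f z * (starRingEnd ℂ) (f z) = 1 := by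
      rw [Complex.mul_conj, Complex.normSq_eq_norm_sq, habs z hz]
      norm_num
    exact (inv_eq_of_mul_eq_one_right h1).symm
  have hmain : ∑ t ∈ A.powersetCard (A.card - n), ∏ z ∈ t, f z
      = ∑ s ∈ A.powersetCard n, (∏ z ∈ A, f z) * (starRingEnd ℂ) (∏ z ∈ s, f z) := by
    refine Finset.sum_nbij' (i := fun t => A \ t) (j := fun s => A \ s) ?_ ?_ ?_ ?_ ?_
    · intro t ht
      rw [Finset.mem_powersetCard] at ht ⊢
      refine ⟨Finset.sdiff_subset, ?_⟩
      rw [Finset.card_sdiff_of_subset ht.1, ht.2]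
      omega
    · intro s hs
      rw [Finset.mem_powersetCard] at hs ⊢
      refine ⟨Finset.sdiff_subset, ?_⟩
      rw [Finset.card_sdiff_of_subset hs.1, hs.2]
    · intro t ht
      rw [Finset.mem_powersetCard] at ht
      exact Finset.sdiff_sdiff_eq_self ht.1
    · intro s hs
      rw [Finset.mem_powersetCard] at hs
      exact Finset.sdiff_sdiff_eq_self hs.1
    · intro t ht
      rw [Finset.mem_powersetCard] at ht
      have hsub : A \ t ⊆ A := Finset.sdiff_subset
      have hconjprod : (starRingEnd ℂ) (∏ z ∈ A \ t, f z) = (∏ z ∈ A \ t, f z)⁻¹ := by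
        rw [map_prod, ← Finset.prod_inv_distrib]
        exact Finset.prod_congr rfl fun z hz => hconj z (hsub hz)
      rw [hconjprod]
      have hprodsplit : (∏ z ∈ A \ t, f z) * (∏ z ∈ t, f z) = ∏ z ∈ A, f z :=
        Finset.prod_sdiff ht.1
      have hne0 : (∏ z ∈ A \ t, f z) ≠ 0 :=
        Finset.prod_ne_zero_iff.mpr fun z hz => hne z (hsub hz)
      field_simp
      linear_combination hprodsplit
  rw [hmain]
  have : ∑ s ∈ A.powersetCard n, (∏ z ∈ A, f z) * (starRingEnd ℂ) (∏ z ∈ s, f z)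
      = (∏ z ∈ A, f z) * (starRingEnd ℂ) (∑ s ∈ A.powersetCard n, ∏ z ∈ s, f z) := by
    rw [map_sum, Finset.mul_sum]
  rw [this, norm_mul]
  have habsA : ‖∏ z ∈ A, f z‖ = 1 := by
    rw [norm_prod]
    exact Finset.prod_eq_one habs
  rw [habsA, one_mul, Complex.norm_conj]

lemma unitsF_eq_image : unitsF d = Finset.image (fun u : (ZMod d)ˣ => (u : ZMod d)) univ := by
  ext z
  rw [mem_unitsF, Finset.mem_image]
  constructor
  · intro hz
    exact ⟨hz.unit, Finset.mem_univ _, hz.unit_spec⟩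
  · rintro ⟨u, -, rfl⟩
    exact u.isUnit

lemma card_unitsF : (unitsF d).card = d.totient := by
  rw [unitsF_eq_image, Finset.card_image_of_injective _ Units.val_injective, Finset.card_univ,
    ZMod.card_units_eq_totient]

lemma filter_not_chi : (unitsF d).filter (fun z => ¬ chi d z = 1) = Aset d (-1) := by
  ext z
  simp only [Finset.mem_filter, mem_unitsF, Aset, Finset.mem_univ, true_and]
  constructor
  · rintro ⟨hz, h⟩; exact (chi_unit hz).resolve_left h
  · intro h
    have hu : IsUnit z := by
      by_contra hz
      rw [chi_eq_zero hz] at h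
      simp at h
    exact ⟨hu, by rw [h]; norm_num⟩

lemma chi_inv {u : ZMod d} (hd : 5 ≤ d) (hu : IsUnit u) (hchi : chi d u = -1) :
    chi d ((hu.unit⁻¹ : (ZMod d)ˣ) : ZMod d) = -1 := by
  have h1 : chi d (((hu.unit⁻¹ : (ZMod d)ˣ) : ZMod d) * u) = 1 := by
    rw [hu.val_inv_mul, chi_one (by omega)]
  rw [chi_mul, hchi] at h1
  omega

lemma card_Aset (hd : 5 ≤ d) (hodd : Odd d) (hsf : Squarefree d) {ε : ℤ}
    (hε : ε = 1 ∨ ε = -1) : (Aset d ε).card = d.totient / 2 := by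
  have hfilt1 : (unitsF d).filter (fun z => chi d z = 1) = Aset d 1 :=
    (Aset_eq_filter_unitsF (Or.inl rfl)).symm
  have hsumcard : (Aset d 1).card + (Aset d (-1)).card = d.totient := by
    rw [← hfilt1, ← filter_not_chi, Finset.card_filter_add_card_filter_not,
      card_unitsF]
  obtain ⟨u, hu, huchi, -⟩ := nonres hodd hsf (Nat.minFac_prime (by omega : d ≠ 1))
    (Nat.minFac_dvd d)
  have hbij : (Aset d 1).card = (Aset d (-1)).card := by
    refine Finset.card_bij' (i := fun z _ => u * z)
      (j := fun w _ => ((hu.unit⁻¹ : (ZMod d)ˣ) : ZMod d) * w) ?_ ?_ ?_ ?_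
    · intro z hz
      simp only [Aset, Finset.mem_filter, Finset.mem_univ, true_and] at hz ⊢
      rw [chi_mul, huchi, hz]
      norm_num
    · intro w hw
      simp only [Aset, Finset.mem_filter, Finset.mem_univ, true_and] at hw ⊢
      rw [chi_mul, chi_inv hd hu huchi, hw]
      norm_num
    · intro z _
      show ((hu.unit⁻¹ : (ZMod d)ˣ) : ZMod d) * (u * z) = z
      rw [← mul_assoc, hu.val_inv_mul, one_mul]
    · intro w _
      show u * (((hu.unit⁻¹ : (ZMod d)ˣ) : ZMod d) * w) = w
      rw [← mul_assoc, hu.mul_val_inv, one_mul]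
  rcases hε with rfl | rfl <;> omega

lemma U_eq (hd : 5 ≤ d) {ε : ℤ} (hε : ε = 1 ∨ ε = -1) :
    ∏ k ∈ (Finset.Icc 1 d).filter (fun k : ℕ => jacobiSym (k : ℤ) d = ε),
        (Polynomial.X - Polynomial.C (zeta d ^ k))
      = ∏ z ∈ Aset d ε, (Polynomial.X - Polynomial.C (ee d z)) := by
  have hd1 : (1 : ℕ) < d := by omega
  refine Finset.prod_nbij' (i := fun k => ((k : ℕ) : ZMod d)) (j := fun z => z.val)
    ?_ ?_ ?_ ?_ ?_
  · intro k hk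
    rw [Finset.mem_filter] at hk
    simp only [Aset, Finset.mem_filter, Finset.mem_univ, true_and]
    rw [chi_natCast]
    exact hk.2
  · intro z hz
    simp only [Aset, Finset.mem_filter, Finset.mem_univ, true_and] at hz
    rw [Finset.mem_filter, Finset.mem_Icc]
    refine ⟨⟨?_, le_of_lt (ZMod.val_lt z)⟩, hz⟩
    by_contra h
    push_neg at h
    have hz0 : z.val = 0 := by omega
    rw [chi, hz0] at hz
    rw [show ((0 : ℕ) : ℤ) = 0 from rfl, jacobiSym.zero_left hd1] at hz
    rcases hε with rfl | rfl <;> simp at hz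
  · intro k hk
    rw [Finset.mem_filter, Finset.mem_Icc] at hk
    have hkd : k < d := by
      rcases Nat.lt_or_ge k d with h | h
      · exact h
      · exfalso
        have hkd : k = d := by omega
        rw [hkd] at hk
        have : jacobiSym (d : ℤ) d = 0 := by
          refine jacobiSym.eq_zero_iff_not_coprime.mpr ?_
          rw [Int.gcd_natCast_natCast, Nat.gcd_self]
          omega
        rw [this] at hk
        rcases hε with rfl | rfl <;> simp at hk
    show (((k : ℕ) : ZMod d)).val = k
    exact ZMod.val_natCast_of_lt hkd
  · intro z _
    show ((z.val : ℕ) : ZMod d) = z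
    rw [ZMod.natCast_val, ZMod.cast_id]
  · intro k _
    rw [ee_natCast]

lemma prod_X_sub_C_coeff_finset {α : Type*} (A : Finset α) (f : α → ℂ) {i : ℕ}
    (hi : i ≤ A.card) :
    (∏ z ∈ A, (Polynomial.X - Polynomial.C (f z))).coeff i
      = (-1) ^ (A.card - i) * ∑ t ∈ A.powersetCard (A.card - i), ∏ z ∈ t, f z := by
  have h1 : ∏ z ∈ A, (Polynomial.X - Polynomial.C (f z))
      = ((A.val.map f).map (fun r => Polynomial.X - Polynomial.C r)).prod := by
    rw [Finset.prod_eq_multiset_prod, Multiset.map_map]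
    rfl
  have hcard : Multiset.card (A.val.map f) = A.card := by simp
  rw [h1, Multiset.prod_X_sub_C_coeff _ (by rwa [hcard]), hcard, Finset.esymm_map_val]

lemma Psi_coeff_bound (hd : 5 ≤ d) (hodd : Odd d) (hsf : Squarefree d) {i : ℕ}
    (hi : i < d.totient / 2) :
    ‖(Psi d).coeff i‖
      ≤ 2 * Gdn d (d.totient / 4) ^ (d.totient / 2 - i) := by
  set dp := d.totient / 2 with hdp
  set G := Gdn d (d.totient / 4) with hGdef
  have hG1 : 1 ≤ G := one_le_Gdn hd _
  have hq : dp / 2 = d.totient / 4 := by rw [hdp, Nat.div_div_eq_div_mul]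
  have hE : ∀ ε : ℤ, (ε = 1 ∨ ε = -1) → ∀ n, n ≤ dp →
      ‖∑ t ∈ (Aset d ε).powersetCard n, ∏ z ∈ t, ee d z‖ ≤ G ^ n := by
    intro ε hε n hn
    have hcard : (Aset d ε).card = dp := card_Aset hd hodd hsf hε
    have hNewton := esymm_bound (Aset d ε) (ee d) G hG1 (d.totient / 4)
      (fun m hm1 hm2 => PP_abs_le hd hodd hsf hm1 hm2 hε)
    by_cases hn4 : n ≤ d.totient / 4
    · exact hNewton n hn4
    · have h1 : dp - n ≤ d.totient / 4 := by omega
      have hcompl := esymm_compl (Aset d ε) (ee d) (fun z _ => abs_ee z)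
        (n := dp - n) (by rw [hcard]; omega)
      rw [hcard] at hcompl
      have h2 : dp - (dp - n) = n := by omega
      rw [h2] at hcompl
      rw [hcompl]
      calc ‖∑ t ∈ (Aset d ε).powersetCard (dp - n), ∏ z ∈ t, ee d z‖
          ≤ G ^ (dp - n) := hNewton _ h1
        _ ≤ G ^ n := pow_le_pow_right₀ hG1 (by omega)
  have hcard1 : (Aset d 1).card = dp := card_Aset hd hodd hsf (Or.inl rfl)
  have hcardm : (Aset d (-1)).card = dp := card_Aset hd hodd hsf (Or.inr rfl)
  have hU1 : (Uplus d).coeff i = (-1) ^ (dp - i) *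
      ∑ t ∈ (Aset d 1).powersetCard (dp - i), ∏ z ∈ t, ee d z := by
    have h := prod_X_sub_C_coeff_finset (Aset d 1) (ee d) (i := i) (by omega)
    rw [hcard1] at h
    rw [show Uplus d = ∏ z ∈ Aset d 1, (Polynomial.X - Polynomial.C (ee d z)) from
      U_eq hd (Or.inl rfl)]
    exact h
  have hUm : (Uminus d).coeff i = (-1) ^ (dp - i) *
      ∑ t ∈ (Aset d (-1)).powersetCard (dp - i), ∏ z ∈ t, ee d z := by
    have h := prod_X_sub_C_coeff_finset (Aset d (-1)) (ee d) (i := i) (by omega)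
    rw [hcardm] at h
    rw [show Uminus d = ∏ z ∈ Aset d (-1), (Polynomial.X - Polynomial.C (ee d z)) from
      U_eq hd (Or.inr rfl)]
    exact h
  calc ‖(Psi d).coeff i‖
      = ‖(Uplus d).coeff i + (Uminus d).coeff i‖ := by
        rw [show Psi d = Uplus d + Uminus d from rfl, Polynomial.coeff_add]
    _ ≤ ‖(Uplus d).coeff i‖ + ‖(Uminus d).coeff i‖ :=
        norm_add_le _ _
    _ ≤ G ^ (dp - i) + G ^ (dp - i) := by
        refine add_le_add ?_ ?_
        · rw [hU1, norm_mul, norm_pow, norm_neg, norm_one, one_pow, one_mul]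
          exact hE 1 (Or.inl rfl) (dp - i) (by omega)
        · rw [hUm, norm_mul, norm_pow, norm_neg, norm_one, one_pow, one_mul]
          exact hE (-1) (Or.inr rfl) (dp - i) (by omega)
    _ = 2 * G ^ (dp - i) := by ring

lemma Psi_facts (hd : 5 ≤ d) (hodd : Odd d) (hsf : Squarefree d) :
    (Psi d).natDegree = d.totient / 2 ∧ (Psi d).coeff (d.totient / 2) = 2 := by
  set dp := d.totient / 2 with hdp
  have hU1eq : Uplus d = ∏ z ∈ Aset d 1, (Polynomial.X - Polynomial.C (ee d z)) :=
    U_eq hd (Or.inl rfl)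
  have hUmeq : Uminus d = ∏ z ∈ Aset d (-1), (Polynomial.X - Polynomial.C (ee d z)) :=
    U_eq hd (Or.inr rfl)
  have hm1 : (Uplus d).Monic := by
    rw [hU1eq]
    exact Polynomial.monic_prod_of_monic _ _ (fun z _ => Polynomial.monic_X_sub_C _)
  have hmm : (Uminus d).Monic := by
    rw [hUmeq]
    exact Polynomial.monic_prod_of_monic _ _ (fun z _ => Polynomial.monic_X_sub_C _)
  have hdeg1 : (Uplus d).natDegree = dp := by
    rw [hU1eq, Polynomial.natDegree_prod_of_monic _ _
      (fun z _ => Polynomial.monic_X_sub_C _)]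
    simp only [Polynomial.natDegree_X_sub_C]
    rw [Finset.sum_const, smul_eq_mul, mul_one, card_Aset hd hodd hsf (Or.inl rfl)]
  have hdegm : (Uminus d).natDegree = dp := by
    rw [hUmeq, Polynomial.natDegree_prod_of_monic _ _
      (fun z _ => Polynomial.monic_X_sub_C _)]
    simp only [Polynomial.natDegree_X_sub_C]
    rw [Finset.sum_const, smul_eq_mul, mul_one, card_Aset hd hodd hsf (Or.inr rfl)]
  have hc : (Psi d).coeff dp = 2 := by
    rw [show Psi d = Uplus d + Uminus d from rfl, Polynomial.coeff_add]
    have h1 : (Uplus d).coeff dp = 1 := by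
      rw [← hdeg1]
      exact hm1.coeff_natDegree
    have h2 : (Uminus d).coeff dp = 1 := by
      rw [← hdegm]
      exact hmm.coeff_natDegree
    rw [h1, h2]
    norm_num
  refine ⟨?_, hc⟩
  refine le_antisymm ?_ (Polynomial.le_natDegree_of_ne_zero (by rw [hc]; norm_num))
  refine (Polynomial.natDegree_add_le _ _).trans ?_
  rw [hdeg1, hdegm]
  simp

end GK
theorem stmt18 (d : ℕ) (hd : 5 ≤ d) (hodd : Odd d) (hsf : Squarefree d)
    (Ψ : Polynomial ℝ) (hΨ : Ψ.map (algebraMap ℝ ℂ) = Psi d)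
    (x : ℝ) (hx : 2 * Gdn d (d.totient / 4) < x) :
    Ψ.eval x ≥ 2 * x ^ (d.totient / 2) *
        (1 - ∑ n ∈ Finset.Icc 1 (d.totient / 2), (Gdn d (d.totient / 4) / x) ^ n) ∧
    0 < 2 * x ^ (d.totient / 2) *
        (1 - ∑ n ∈ Finset.Icc 1 (d.totient / 2), (Gdn d (d.totient / 4) / x) ^ n) := by
  haveI : NeZero d := ⟨by omega⟩
  set dp := d.totient / 2 with hdp
  set G := Gdn d (d.totient / 4) with hGdef
  have hG1 : 1 ≤ G := GK.one_le_Gdn hd _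
  have hx0 : 0 < x := by linarith
  have hx1 : 1 < x := by linarith
  have hΨc : ∀ i, ((Ψ.coeff i : ℝ) : ℂ) = (Psi d).coeff i := by
    intro i
    rw [← hΨ, Polynomial.coeff_map]
    rfl
  obtain ⟨hdeg, hlead⟩ := GK.Psi_facts (d := d) hd hodd hsf
  have hΨdeg : Ψ.natDegree = dp := by
    have h := Polynomial.natDegree_map_eq_of_injective
      (algebraMap ℝ ℂ).injective Ψ
    rw [hΨ] at h
    rw [← h, hdeg]
  have hΨlead : Ψ.coeff dp = 2 := by
    have h := hΨc dp
    rw [hlead] at h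
    exact_mod_cast h
  have hcoeff : ∀ i, i < dp → |Ψ.coeff i| ≤ 2 * G ^ (dp - i) := by
    intro i hi
    have h := GK.Psi_coeff_bound (d := d) hd hodd hsf hi
    rwa [← hΨc i, Complex.norm_real, Real.norm_eq_abs] at h
  -- evaluate
  have heval : Ψ.eval x = Ψ.coeff dp * x ^ dp + ∑ i ∈ range dp, Ψ.coeff i * x ^ i := by
    rw [Polynomial.eval_eq_sum_range, hΨdeg, Finset.sum_range_succ]
    ring
  have hterm : ∀ i ∈ range dp, -(2 * G ^ (dp - i) * x ^ i) ≤ Ψ.coeff i * x ^ i := by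
    intro i hi
    rw [Finset.mem_range] at hi
    have h := hcoeff i hi
    have h1 : -(2 * G ^ (dp - i)) ≤ Ψ.coeff i := neg_le_of_abs_le h
    have h2 := mul_le_mul_of_nonneg_right h1 (pow_nonneg hx0.le i)
    calc -(2 * G ^ (dp - i) * x ^ i) = -(2 * G ^ (dp - i)) * x ^ i := by ring
      _ ≤ Ψ.coeff i * x ^ i := h2
  have hsum1 : - ∑ i ∈ range dp, 2 * G ^ (dp - i) * x ^ i
      ≤ ∑ i ∈ range dp, Ψ.coeff i * x ^ i := by
    rw [← Finset.sum_neg_distrib]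
    exact Finset.sum_le_sum hterm
  have hre : ∑ i ∈ range dp, 2 * G ^ (dp - i) * x ^ i
      = ∑ n ∈ Finset.Icc 1 dp, 2 * G ^ n * x ^ (dp - n) := by
    refine Finset.sum_nbij' (i := fun i => dp - i) (j := fun n => dp - n) ?_ ?_ ?_ ?_ ?_
    · intro i hi
      rw [Finset.mem_range] at hi
      show dp - i ∈ Finset.Icc 1 dp
      rw [Finset.mem_Icc]
      omega
    · intro n hn
      rw [Finset.mem_Icc] at hn
      show dp - n ∈ range dp
      rw [Finset.mem_range]
      omega
    · intro i hi
      rw [Finset.mem_range] at hi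
      show dp - (dp - i) = i
      omega
    · intro n hn
      rw [Finset.mem_Icc] at hn
      show dp - (dp - n) = n
      omega
    · intro i hi
      rw [Finset.mem_range] at hi
      show 2 * G ^ (dp - i) * x ^ i = 2 * G ^ (dp - i) * x ^ (dp - (dp - i))
      have h2 : dp - (dp - i) = i := by omega
      rw [h2]
  have hRHSeq : 2 * x ^ dp * (1 - ∑ n ∈ Finset.Icc 1 dp, (G / x) ^ n)
      = 2 * x ^ dp - ∑ n ∈ Finset.Icc 1 dp, 2 * G ^ n * x ^ (dp - n) := by
    rw [mul_sub, mul_one, Finset.mul_sum]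
    congr 1
    refine Finset.sum_congr rfl fun n hn => ?_
    rw [Finset.mem_Icc] at hn
    have hxd : x ^ dp = x ^ (dp - n) * x ^ n := by
      rw [← pow_add, Nat.sub_add_cancel hn.2]
    rw [div_pow, hxd]
    field_simp
  constructor
  · rw [hRHSeq, heval, hΨlead]
    rw [← hre]
    linarith
  · have hr2 : G / x < 1 / 2 := by
      rw [div_lt_iff₀ hx0]
      linarith
    have hr0 : 0 < G / x := by positivity
    have hS : ∑ n ∈ Finset.Icc 1 dp, (G / x) ^ n < 1 := by
      have hstep : ∀ n ∈ Finset.Icc 1 dp, (G / x) ^ n ≤ (G / x) * (1 / 2 : ℝ) ^ (n - 1) := by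
        intro n hn
        rw [Finset.mem_Icc] at hn
        have h1 : (G / x) ^ n = (G / x) * (G / x) ^ (n - 1) := by
          rw [← pow_succ']
          congr 1
          omega
        rw [h1]
        refine mul_le_mul_of_nonneg_left ?_ hr0.le
        exact pow_le_pow_left₀ hr0.le hr2.le _
      have hgeom : ∑ n ∈ Finset.Icc 1 dp, (G / x) * (1 / 2 : ℝ) ^ (n - 1)
          = (G / x) * ∑ j ∈ range dp, (1 / 2 : ℝ) ^ j := by
        rw [Finset.mul_sum]
        refine Finset.sum_nbij' (i := fun n => n - 1) (j := fun j => j + 1) ?_ ?_ ?_ ?_ ?_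
        · intro n hn
          rw [Finset.mem_Icc] at hn
          show n - 1 ∈ range dp
          rw [Finset.mem_range]
          omega
        · intro j hj
          rw [Finset.mem_range] at hj
          show j + 1 ∈ Finset.Icc 1 dp
          rw [Finset.mem_Icc]
          omega
        · intro n hn
          rw [Finset.mem_Icc] at hn
          show n - 1 + 1 = n
          omega
        · intro j _
          show j + 1 - 1 = j
          omega
        · intro n _
          show (G / x) * (1 / 2 : ℝ) ^ (n - 1) = (G / x) * (1 / 2 : ℝ) ^ (n - 1)
          rfl
      have hgeo2 : ∑ j ∈ range dp, (1 / 2 : ℝ) ^ j ≤ 2 := by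
        rw [geom_sum_eq (by norm_num : (1 / 2 : ℝ) ≠ 1)]
        have hp : (0:ℝ) ≤ (1 / 2 : ℝ) ^ dp := by positivity
        rw [div_le_iff_of_neg (by norm_num : (1 / 2 : ℝ) - 1 < 0)]
        linarith
      calc ∑ n ∈ Finset.Icc 1 dp, (G / x) ^ n
          ≤ ∑ n ∈ Finset.Icc 1 dp, (G / x) * (1 / 2 : ℝ) ^ (n - 1) :=
            Finset.sum_le_sum hstep
        _ = (G / x) * ∑ j ∈ range dp, (1 / 2 : ℝ) ^ j := hgeom
        _ ≤ (G / x) * 2 := by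
            refine mul_le_mul_of_nonneg_left hgeo2 hr0.le
        _ < 1 := by linarith
    have hxp : (0:ℝ) < x ^ dp := pow_pos hx0 dp
    nlinarith [hS, hxp]
end
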